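/- arXiv:1701.08726 — 6 statements merged into one kernel-verified Lean document; each statement's English description precedes it below -/
import Mathlib

section
/- Let φ: G → G' be a graph homomorphism and k = max_{v ∈ V(G')} |φ^{-1}(v)|. Then Hun(G) ≤ k · Hun(G'). In particular, if H is a subgraph of G then Hun(H) ≤ Hun(G). -/
open Finset
open scoped Classical

variable {V : Type*} [Fintype V]

/-- Open neighborhood of a set of vertices. -/
noncomputable def nbhd (G : SimpleGraph V) (S : Finset V) : Finset V :=
  Finset.univ.filter fun w => ∃ v ∈ S, G.Adj v w

/-- Possible rabbit positions after playing the strategy `L`, starting from `S`. -/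
noncomputable def rabbitFrom (G : SimpleGraph V) (S : Finset V) (L : List (Finset V)) : Finset V :=
  L.foldl (fun R H => nbhd G (R \ H)) S

/-- A strategy wins if the set of possible rabbit positions is eventually empty. -/
def Wins (G : SimpleGraph V) (L : List (Finset V)) : Prop :=
  rabbitFrom G Finset.univ L = ∅

/-- The hunter number: minimum over winning strategies of the max number of simultaneous shots. -/
noncomputable def hunterNumber (G : SimpleGraph V) : ℕ :=
  sInf {k | ∃ L : List (Finset V), Wins G L ∧ ∀ s ∈ L, s.card ≤ k}

lemma hunterSet_nonempty (G : SimpleGraph V) :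
    {k | ∃ L : List (Finset V), Wins G L ∧ ∀ s ∈ L, s.card ≤ k}.Nonempty := by
  refine ⟨Fintype.card V, [Finset.univ], ?_, ?_⟩
  · simp [Wins, rabbitFrom, nbhd]
  · intro s hs; simp at hs; subst hs; simp

lemma rabbit_mono_hom {V V' : Type*} [Fintype V] [Fintype V']
    {G : SimpleGraph V} {G' : SimpleGraph V'} (φ : G →g G')
    (L : List (Finset V')) (R : Finset V) (R' : Finset V')
    (h : R ⊆ Finset.univ.filter fun v => φ v ∈ R') :
    rabbitFrom G R (L.map fun S => Finset.univ.filter fun v => φ v ∈ S)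
      ⊆ Finset.univ.filter fun v => φ v ∈ rabbitFrom G' R' L := by
  induction L generalizing R R' with
  | nil => exact h
  | cons H' L ih =>
    simp only [List.map_cons, rabbitFrom, List.foldl_cons]
    apply ih
    intro w hw
    simp only [nbhd, mem_filter, mem_univ, true_and] at hw ⊢
    obtain ⟨v, hv, hadj⟩ := hw
    rw [mem_sdiff, mem_filter] at hv
    refine ⟨φ v, ?_, φ.map_adj hadj⟩
    rw [mem_sdiff]
    have := h hv.1
    rw [mem_filter] at this
    exact ⟨this.2, fun hc => hv.2 ⟨mem_univ v, hc⟩⟩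

lemma rabbit_mono_sub {G H : SimpleGraph V} (hHG : H ≤ G)
    (L : List (Finset V)) (R R' : Finset V) (h : R ⊆ R') :
    rabbitFrom H R L ⊆ rabbitFrom G R' L := by
  induction L generalizing R R' with
  | nil => simpa [rabbitFrom] using h
  | cons Hs L ih =>
    simp only [rabbitFrom, List.foldl_cons]
    apply ih
    intro w hw
    simp only [nbhd, mem_filter, mem_univ, true_and] at hw ⊢
    obtain ⟨v, hv, hadj⟩ := hw
    exact ⟨v, sdiff_subset_sdiff h (le_refl _) hv, hHG hadj⟩

/-- If $φ : G → G'$ is a graph homomorphism with maximum fiber size $k$, then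
$Hun(G) ≤ k·Hun(G')$; in particular subgraphs have smaller hunter number. -/
theorem hunterNumber_le_of_hom {V V' : Type*} [Fintype V] [Fintype V']
    (G : SimpleGraph V) (G' : SimpleGraph V') (φ : G →g G') (k : ℕ)
    (hk : k = Finset.univ.sup fun w : V' => (Finset.univ.filter fun v => φ v = w).card) :
    hunterNumber G ≤ k * hunterNumber G' ∧
      ∀ H : SimpleGraph V, H ≤ G → hunterNumber H ≤ hunterNumber G := by
  constructor
  · have hmem := Nat.sInf_mem (hunterSet_nonempty G')
    obtain ⟨L', hw', hc'⟩ := hmem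
    apply Nat.sInf_le
    refine ⟨L'.map fun S => Finset.univ.filter fun v => φ v ∈ S, ?_, ?_⟩
    · have := rabbit_mono_hom φ L' (Finset.univ) (Finset.univ) (by simp)
      rw [Wins, ← subset_empty]
      refine this.trans ?_
      rw [hw']
      simp
    · intro s hs
      simp only [List.mem_map] at hs
      obtain ⟨S, hS, rfl⟩ := hs
      calc (Finset.univ.filter fun v => φ v ∈ S).card
          ≤ (S.biUnion fun w => Finset.univ.filter fun v => φ v = w).card := by
            apply card_le_card
            intro v hv
            rw [mem_filter] at hv
            rw [mem_biUnion]
            exact ⟨φ v, hv.2, by simp⟩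
        _ ≤ ∑ w ∈ S, (Finset.univ.filter fun v => φ v = w).card := card_biUnion_le
        _ ≤ ∑ _w ∈ S, k := by
            apply Finset.sum_le_sum
            intro w _
            rw [hk]
            exact Finset.le_sup (f := fun w : V' => (Finset.univ.filter fun v => φ v = w).card) (mem_univ w)
        _ = S.card * k := by rw [Finset.sum_const, smul_eq_mul]
        _ ≤ (hunterNumber G') * k := Nat.mul_le_mul_right k (hc' S hS)
        _ = k * hunterNumber G' := Nat.mul_comm _ _
  · intro H hHG
    have hmem := Nat.sInf_mem (hunterSet_nonempty G)
    obtain ⟨L, hw, hc⟩ := hmem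
    apply Nat.sInf_le
    refine ⟨L, ?_, hc⟩
    have h2 := rabbit_mono_sub hHG L Finset.univ Finset.univ (subset_refl _)
    rw [Wins] at hw ⊢
    rw [hw] at h2
    exact Finset.subset_empty.mp h2
end

section
/- If the degeneracy of G is at least k (i.e., G contains a subgraph of minimum degree at least k), then Hun(G) ≥ k. -/
open Finset
open scoped Classical

variable {V : Type*} [Fintype V]

/-- If $G$ contains a (nonempty) subgraph of minimum degree at least $k$,
then $Hun(G) ≥ k$. -/
theorem degeneracy_le_hunterNumber {V : Type*} [Fintype V] (G : SimpleGraph V) (k : ℕ)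
    (h : ∃ s : Finset V, s.Nonempty ∧ ∀ v ∈ s, k ≤ ((nbhd G {v}) ∩ s).card) :
    k ≤ hunterNumber G := by
  classical
  obtain ⟨s, hsne, hdeg⟩ := h
  -- key lemma: if all shots have card < k, then s stays inside rabbit positions
  have key : ∀ (L : List (Finset V)) (R : Finset V), s ⊆ R →
      (∀ H ∈ L, H.card < k) → s ⊆ rabbitFrom G R L := by
    intro L
    induction L with
    | nil => intro R hR _; simpa [rabbitFrom] using hR
    | cons H L ih =>
      intro R hR hcard
      have step : s ⊆ nbhd G (R \ H) := by
        intro w hw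
        have hk := hdeg w hw
        have hH : H.card < k := hcard H (by simp)
        have : ¬ (nbhd G {w} ∩ s ⊆ H) := by
          intro hsub
          exact absurd (le_trans hk (Finset.card_le_card hsub)) (not_le.mpr hH)
        obtain ⟨v, hv, hvH⟩ := Finset.not_subset.mp this
        simp only [nbhd, Finset.mem_inter, Finset.mem_filter, Finset.mem_univ,
          true_and, Finset.mem_singleton] at hv
        obtain ⟨⟨u, hu, hadj⟩, hvs⟩ := hv
        subst hu
        simp only [nbhd, Finset.mem_filter, Finset.mem_univ, true_and]
        exact ⟨v, Finset.mem_sdiff.mpr ⟨hR hvs, hvH⟩, hadj.symm⟩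
      have : rabbitFrom G R (H :: L) = rabbitFrom G (nbhd G (R \ H)) L := rfl
      rw [this]
      exact ih _ step (fun H' hH' => hcard H' (by simp [hH']))
  -- the set is nonempty: shoot everything
  have hne : {k | ∃ L : List (Finset V), Wins G L ∧ ∀ s ∈ L, s.card ≤ k}.Nonempty := by
    refine ⟨Fintype.card V, [Finset.univ], ?_, ?_⟩
    · simp [Wins, rabbitFrom, nbhd, Finset.eq_empty_iff_forall_notMem]
    · intro t ht
      simp only [List.mem_singleton] at ht
      simp [ht]
  rw [hunterNumber]
  refine le_csInf hne ?_
  rintro m ⟨L, hwin, hcards⟩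
  by_contra hmk
  push_neg at hmk
  have hsub : s ⊆ rabbitFrom G Finset.univ L :=
    key L Finset.univ (Finset.subset_univ s) (fun H hH => lt_of_le_of_lt (hcards H hH) hmk)
  rw [Wins] at hwin
  obtain ⟨w, hw⟩ := hsne
  have := hsub hw
  rw [hwin] at this
  exact absurd this (Finset.notMem_empty w)
end

section
/- Let G be a connected bipartite graph with parts E, O. If a hunter strategy H respects parity (its shots alternate between the two parts starting with O) and catches every rabbit that starts on a vertex of O, then there is a winning hunter strategy for arbitrary rabbit starting position using the same maximum number of simultaneous shots. Specifically, if H has odd length then H·H wins, and if H has even length then H·(∅)·H wins. -/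
open Finset
open scoped Classical

variable {V : Type*} [Fintype V]

lemma nbhd_mono (G : SimpleGraph V) {S T : Finset V} (h : S ⊆ T) :
    nbhd G S ⊆ nbhd G T := by
  intro w hw
  simp only [nbhd, mem_filter, mem_univ, true_and] at hw ⊢
  obtain ⟨v, hv, ha⟩ := hw
  exact ⟨v, h hv, ha⟩

lemma rabbitFrom_mono (G : SimpleGraph V) (L : List (Finset V)) :
    ∀ {S T : Finset V}, S ⊆ T → rabbitFrom G S L ⊆ rabbitFrom G T L := by
  induction L with
  | nil => intro S T h; exact h
  | cons H L ih =>
      intro S T h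
      exact ih (nbhd_mono G (sdiff_subset_sdiff h (Finset.Subset.refl H)))

lemma nbhd_union (G : SimpleGraph V) (A B : Finset V) :
    nbhd G (A ∪ B) = nbhd G A ∪ nbhd G B := by
  ext w
  simp only [nbhd, mem_filter, mem_univ, true_and, mem_union]
  constructor
  · rintro ⟨v, hv | hv, ha⟩
    · exact Or.inl ⟨v, hv, ha⟩
    · exact Or.inr ⟨v, hv, ha⟩
  · rintro (⟨v, hv, ha⟩ | ⟨v, hv, ha⟩)
    · exact ⟨v, Or.inl hv, ha⟩
    · exact ⟨v, Or.inr hv, ha⟩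

lemma rabbitFrom_union (G : SimpleGraph V) (L : List (Finset V)) :
    ∀ (A B : Finset V), rabbitFrom G (A ∪ B) L = rabbitFrom G A L ∪ rabbitFrom G B L := by
  induction L with
  | nil => intro A B; rfl
  | cons H L ih =>
      intro A B
      show rabbitFrom G (nbhd G ((A ∪ B) \ H)) L = _
      rw [Finset.union_sdiff_distrib, nbhd_union]
      exact ih _ _

lemma rabbitFrom_append (G : SimpleGraph V) (S : Finset V) (L₁ L₂ : List (Finset V)) :
    rabbitFrom G S (L₁ ++ L₂) = rabbitFrom G (rabbitFrom G S L₁) L₂ :=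
  List.foldl_append

lemma rabbitFrom_alternate (G : SimpleGraph V) (L : List (Finset V)) :
    ∀ (A B S : Finset V), (∀ v w, G.Adj v w → v ∈ A → w ∈ B) →
      (∀ v w, G.Adj v w → v ∈ B → w ∈ A) → S ⊆ A →
      rabbitFrom G S L ⊆ if Even L.length then A else B := by
  induction L with
  | nil => intro A B S _ _ hS; simpa [rabbitFrom] using hS
  | cons H L ih =>
      intro A B S hAB hBA hS
      have h1 : nbhd G (S \ H) ⊆ B := by
        intro w hw
        simp only [nbhd, mem_filter, mem_univ, true_and] at hw
        obtain ⟨v, hv, ha⟩ := hw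
        exact hAB v w ha (hS (mem_sdiff.mp hv).1)
      have h2 := ih B A _ hBA hAB h1
      show rabbitFrom G (nbhd G (S \ H)) L ⊆ _
      have hpar : Even (H :: L).length ↔ ¬ Even L.length := by
        simp [List.length_cons, Nat.even_add_one]
      by_cases he : Even L.length
      · rw [if_pos he] at h2
        rw [if_neg (by simp [List.length_cons, Nat.even_add_one, he])]
        exact h2
      · rw [if_neg he] at h2
        rw [if_pos (hpar.mpr he)]
        exact h2

/-- For a connected bipartite graph with parts $O$ and $Oᶜ$, a parity-respecting
strategy that catches every rabbit starting in $O$ extends to a fully winning strategy: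
doubling it (with an idle step inserted if its length is even). -/
theorem bipartite_parity_strategy_extension {V : Type*} [Fintype V]
    (G : SimpleGraph V) (hconn : G.Connected) (O : Finset V)
    (hbip : ∀ v w, G.Adj v w → (v ∈ O ↔ w ∉ O))
    (L : List (Finset V))
    (hpar : ∀ (i : ℕ) (h : i < L.length), L.get ⟨i, h⟩ ⊆ if Even i then O else Oᶜ)
    (hwin : rabbitFrom G O L = ∅) :
    (Odd L.length → Wins G (L ++ L)) ∧
      (Even L.length → Wins G (L ++ [∅] ++ L)) := by
  have hAB : ∀ v w, G.Adj v w → v ∈ Oᶜ → w ∈ O := by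
    intro v w ha hv
    rw [Finset.mem_compl] at hv
    by_contra hw
    exact hv ((hbip v w ha).mpr hw)
  have hBA : ∀ v w, G.Adj v w → v ∈ O → w ∈ Oᶜ := by
    intro v w ha hv
    rw [Finset.mem_compl]
    exact (hbip v w ha).mp hv
  have hO : ∀ T : Finset V, T ⊆ O → rabbitFrom G T L = ∅ := by
    intro T hT
    have := rabbitFrom_mono G L hT
    rw [hwin] at this
    exact Finset.subset_empty.mp this
  have hsplit : rabbitFrom G Finset.univ L = rabbitFrom G Oᶜ L := by
    have : (Finset.univ : Finset V) = O ∪ Oᶜ := by simp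
    rw [this, rabbitFrom_union, hwin, Finset.empty_union]
  have halt := rabbitFrom_alternate G L Oᶜ O Oᶜ hAB hBA (Finset.Subset.refl _)
  constructor
  · intro hodd
    have hne : ¬ Even L.length := Nat.not_even_iff_odd.symm.mp hodd
    rw [if_neg hne] at halt
    unfold Wins
    rw [rabbitFrom_append]
    exact hO _ (hsplit ▸ halt)
  · intro heven
    rw [if_pos heven] at halt
    unfold Wins
    rw [rabbitFrom_append, rabbitFrom_append]
    have h1 : rabbitFrom G Finset.univ L ⊆ Oᶜ := hsplit ▸ halt
    have h2 : rabbitFrom G (rabbitFrom G Finset.univ L) [∅] ⊆ O := by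
      show nbhd G (rabbitFrom G Finset.univ L \ ∅) ⊆ O
      rw [Finset.sdiff_empty]
      intro w hw
      simp only [nbhd, mem_filter, mem_univ, true_and] at hw
      obtain ⟨v, hv, ha⟩ := hw
      exact hAB v w ha (h1 hv)
    exact hO _ h2
end

section
/- In the hypercube Q^n, if C is an initial segment of the weightlex order restricted to even-weight vertices, then N(C) is an initial segment of the weightlex order restricted to odd-weight vertices (and symmetrically with even and odd interchanged). -/
open Finset
open scoped Classical

variable {V : Type*} [Fintype V]

/-- The hypercube graph on subsets of `Fin n`: adjacent iff symmetric difference a singleton. -/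
noncomputable def Q (n : ℕ) : SimpleGraph (Finset (Fin n)) where
  Adj x y := (symmDiff x y).card = 1
  symm := by
    constructor
    intro x y h
    rwa [symmDiff_comm]
  loopless := by
    constructor
    intro x
    simp [symmDiff_self]

/-- Strict weightlex order: smaller weight, or equal weight and the minimum of the
symmetric difference belongs to the first set. -/
def wlexLt {n : ℕ} (x y : Finset (Fin n)) : Prop :=
  x.card < y.card ∨
    (x.card = y.card ∧ ∃ a ∈ x, a ∉ y ∧ ∀ b ∈ symmDiff x y, a ≤ b)

/-- `S` is an initial segment of weightlex order restricted to the class `P`. -/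
def IsInitSeg {n : ℕ} (P : Finset (Fin n) → Prop) (S : Finset (Finset (Fin n))) : Prop :=
  (∀ x ∈ S, P x) ∧ ∀ x y, y ∈ S → P x → wlexLt x y → x ∈ S

lemma symmDiff_erase' {n} {x : Finset (Fin n)} {a : Fin n} (ha : a ∈ x) :
    symmDiff (x.erase a) x = {a} := by
  ext b
  by_cases hb : b = a <;> simp [mem_symmDiff, mem_erase, hb, ha]

lemma adj_erase {n} {x : Finset (Fin n)} {a : Fin n} (ha : a ∈ x) :
    (Q n).Adj (x.erase a) x := by
  show (symmDiff (x.erase a) x).card = 1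
  rw [symmDiff_erase' ha]; simp

lemma adj_cases {n} {c y : Finset (Fin n)} (h : (Q n).Adj c y) :
    ∃ e, (e ∉ y ∧ c = insert e y) ∨ (e ∈ y ∧ c = y.erase e) := by
  have h1 : (symmDiff c y).card = 1 := h
  obtain ⟨e, he⟩ := card_eq_one.mp h1
  have hmem : ∀ b, b ∈ symmDiff c y ↔ b = e := by
    intro b; rw [he]; simp
  have heC : (e ∈ c ∧ e ∉ y) ∨ (e ∈ y ∧ e ∉ c) := by
    have := (hmem e).mpr rfl
    simpa [mem_symmDiff] using this
  refine ⟨e, ?_⟩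
  by_cases hey : e ∈ y
  · right
    refine ⟨hey, ?_⟩
    ext b
    by_cases hb : b = e
    · subst hb; simp [mem_erase]; tauto
    · have : b ∉ symmDiff c y := by rw [hmem]; exact hb
      simp [mem_symmDiff] at this
      simp [mem_erase, hb]
      tauto
  · left
    refine ⟨hey, ?_⟩
    ext b
    by_cases hb : b = e
    · subst hb; simp [mem_insert]; tauto
    · have : b ∉ symmDiff c y := by rw [hmem]; exact hb
      simp [mem_symmDiff] at this
      simp [mem_insert, hb]
      tauto

lemma key {n} {x y c : Finset (Fin n)} (hpar : x.card % 2 = y.card % 2)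
    (hxy : wlexLt x y) (hyc : (Q n).Adj c y) :
    ∃ c', (Q n).Adj c' x ∧ (c' = c ∨ wlexLt c' c) := by
  obtain ⟨e, hcase⟩ := adj_cases hyc
  have hcc : c.card = y.card + 1 ∨ c.card + 1 = y.card := by
    rcases hcase with ⟨he, rfl⟩ | ⟨he, rfl⟩
    · left; exact card_insert_of_notMem he
    · right
      have h1 : 1 ≤ y.card := card_pos.mpr ⟨e, he⟩
      rw [card_erase_of_mem he]; omega
  rcases hxy with hlt | ⟨hcard, a, hax, hay, hmin⟩
  · -- smaller weight
    have h2 : x.card + 2 ≤ y.card := by omega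
    by_cases hx : x = ∅
    · subst hx
      rw [card_empty] at h2 hpar
      have hcpos : 0 < c.card := by omega
      obtain ⟨a, ha⟩ := card_pos.mp hcpos
      refine ⟨{a}, ?_, ?_⟩
      · show (symmDiff ({a} : Finset (Fin n)) ∅).card = 1
        rw [show (∅:Finset (Fin n)) = ⊥ from rfl, symmDiff_bot]
        simp
      · by_cases h1 : c.card = 1
        · left
          obtain ⟨b, rfl⟩ := card_eq_one.mp h1
          simp at ha; rw [ha]
        · right; left
          show ({a}:Finset (Fin n)).card < c.card
          rw [card_singleton]; omega
    · obtain ⟨a, ha⟩ := nonempty_iff_ne_empty.mpr hx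
      refine ⟨x.erase a, adj_erase ha, Or.inr (Or.inl ?_)⟩
      rw [card_erase_of_mem ha]
      have h1 : 1 ≤ x.card := card_pos.mpr ⟨a, ha⟩
      omega
  · -- equal weight
    have hxpos : 1 ≤ x.card := card_pos.mpr ⟨a, hax⟩
    rcases hcase with ⟨he, rfl⟩ | ⟨he, hc⟩
    · -- c = insert e y : go down in weight
      refine ⟨x.erase a, adj_erase hax, Or.inr (Or.inl ?_)⟩
      rw [card_erase_of_mem hax, card_insert_of_notMem he]
      omega
    · -- c = y.erase e
      have hccard : c.card + 1 = y.card := by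
        have h1 : 1 ≤ y.card := card_pos.mpr ⟨e, he⟩
        rw [hc, card_erase_of_mem he]; omega
      have hea : e ≠ a := fun h => hay (h ▸ he)
      by_cases hex : e ∈ x
      · refine ⟨x.erase e, adj_erase hex, Or.inr (Or.inr ⟨?_, a, ?_, ?_, ?_⟩)⟩
        · rw [card_erase_of_mem hex]; omega
        · exact mem_erase.mpr ⟨(fun h => hea h.symm), hax⟩
        · rw [hc]; exact fun h => hay (mem_of_mem_erase h)
        · intro b hb
          apply hmin
          rw [hc] at hb
          simp [mem_symmDiff, mem_erase] at hb
          simp [mem_symmDiff]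
          tauto
      · -- e ∉ x
        have hae : a < e := by
          have : a ≤ e := hmin e (by simp [mem_symmDiff]; tauto)
          exact lt_of_le_of_ne this (fun h => hea h.symm)
        have hne : x.Nonempty := ⟨a, hax⟩
        set M := x.max' hne with hM
        have hMx : M ∈ x := x.max'_mem hne
        have haM : a ≤ M := x.le_max' a hax
        by_cases hMa : M = a
        · -- x.erase a = c
          refine ⟨x.erase M, adj_erase hMx, Or.inl ?_⟩
          rw [hMa]
          have hsub : x.erase a ⊆ y.erase e := by
            intro b hb
            rw [mem_erase] at hb
            obtain ⟨hba, hbx⟩ := hb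
            have hbM : b ≤ M := x.le_max' b hbx
            have hblt : b < a := lt_of_le_of_ne (hMa ▸ hbM) hba
            have hby : b ∈ y := by
              by_contra hby
              have : a ≤ b := hmin b (by simp [mem_symmDiff]; tauto)
              omega
            exact mem_erase.mpr ⟨by intro h; subst h; omega, hby⟩
          rw [hc]
          apply eq_of_subset_of_card_le hsub
          rw [card_erase_of_mem he, card_erase_of_mem hax]
          omega
        · have haM' : a < M := lt_of_le_of_ne haM (fun h => hMa h.symm)
          refine ⟨x.erase M, adj_erase hMx, Or.inr (Or.inr ⟨?_, a, ?_, ?_, ?_⟩)⟩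
          · rw [card_erase_of_mem hMx]; omega
          · exact mem_erase.mpr ⟨fun h => hMa h.symm, hax⟩
          · rw [hc]; exact fun h => hay (mem_of_mem_erase h)
          · intro b hb
            by_contra hab
            push_neg at hab
            have hbe : b ≠ e := by intro h; subst h; omega
            have hbM : b ≠ M := by intro h; subst h; omega
            have hbxy : b ∉ symmDiff x y := by
              intro h
              exact absurd (hmin b h) (by omega)
            rw [hc] at hb
            simp [mem_symmDiff, mem_erase, hbe, hbM] at hb hbxy
            tauto

lemma adj_card_parity {n} {a b : Finset (Fin n)} (h : (Q n).Adj a b) :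
    a.card % 2 ≠ b.card % 2 := by
  obtain ⟨e, hc⟩ := adj_cases h
  rcases hc with ⟨he, rfl⟩ | ⟨he, rfl⟩
  · rw [card_insert_of_notMem he]; omega
  · have h1 : 1 ≤ b.card := card_pos.mpr ⟨e, he⟩
    rw [card_erase_of_mem he]; omega

lemma mem_nbhd {n} {C : Finset (Finset (Fin n))} {z : Finset (Fin n)} :
    z ∈ nbhd (Q n) C ↔ ∃ v ∈ C, (Q n).Adj v z := by
  simp [nbhd]

lemma aux_main {n} (C : Finset (Finset (Fin n))) (p q : ℕ) (hpq : p ≠ q) (hp2 : p < 2)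
    (hq2 : q < 2)
    (hC1 : ∀ x ∈ C, x.card % 2 = p)
    (hC2 : ∀ x y, y ∈ C → x.card % 2 = p → wlexLt x y → x ∈ C) :
    (∀ z ∈ nbhd (Q n) C, z.card % 2 = q) ∧
      ∀ x y, y ∈ nbhd (Q n) C → x.card % 2 = q → wlexLt x y → x ∈ nbhd (Q n) C := by
  have hfst : ∀ z ∈ nbhd (Q n) C, z.card % 2 = q := by
    intro z hz
    obtain ⟨v, hv, hadj⟩ := mem_nbhd.mp hz
    have h1 := adj_card_parity hadj
    have h2 := hC1 v hv
    omega
  refine ⟨hfst, ?_⟩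
  intro x y hy hx hxy
  obtain ⟨c, hc, hadj⟩ := mem_nbhd.mp hy
  have hyq : y.card % 2 = q := hfst y hy
  have hpar : x.card % 2 = y.card % 2 := by omega
  obtain ⟨c', hadj', hle⟩ := key hpar hxy hadj
  have hc'p : c'.card % 2 = p := by
    have h1 := adj_card_parity hadj'
    omega
  have hc'C : c' ∈ C := by
    rcases hle with rfl | hle
    · exact hc
    · exact hC2 c' c hc hc'p hle
  exact mem_nbhd.mpr ⟨c', hc'C, hadj'⟩

/-- The neighborhood of an initial segment of weightlex-even is an initial segment of
weightlex-odd, and symmetrically. -/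
theorem nbhd_initSeg_wlex (n : ℕ) (C : Finset (Finset (Fin n))) :
    (IsInitSeg (fun x => Even x.card) C →
      IsInitSeg (fun x => Odd x.card) (nbhd (Q n) C)) ∧
    (IsInitSeg (fun x => Odd x.card) C →
      IsInitSeg (fun x => Even x.card) (nbhd (Q n) C)) := by
  constructor
  · rintro ⟨h1, h2⟩
    have H := aux_main C 0 1 (by norm_num) (by norm_num) (by norm_num)
      (fun x hx => Nat.even_iff.mp (h1 x hx))
      (fun x y hy hx hxy => h2 x y hy (Nat.even_iff.mpr hx) hxy)
    exact ⟨fun z hz => Nat.odd_iff.mpr (H.1 z hz),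
      fun x y hy hx hxy => H.2 x y hy (Nat.odd_iff.mp hx) hxy⟩
  · rintro ⟨h1, h2⟩
    have H := aux_main C 1 0 (by norm_num) (by norm_num) (by norm_num)
      (fun x hx => Nat.odd_iff.mp (h1 x hx))
      (fun x y hy hx hxy => h2 x y hy (Nat.odd_iff.mpr hx) hxy)
    exact ⟨fun z hz => Nat.even_iff.mpr (H.1 z hz),
      fun x y hy hx hxy => H.2 x y hy (Nat.even_iff.mp hx) hxy⟩
end

section
/- In the hypercube Q^n, for every set A of even-weight vertices with |A| = k, if C is the initial segment of weightlex-even order of size k, then |N(A)| ≥ |N(C)|. -/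
open Finset
open scoped Classical

variable {V : Type*} [Fintype V]

namespace Harper

variable {n : ℕ}

/-- binary weight: sum of `2^(n-1-i)` over `i ∈ x`. -/
def bitw (x : Finset (Fin n)) : ℕ := ∑ i ∈ x, 2^(n-1-(i:ℕ))

lemma sum_two_pow_range (K : ℕ) : ∑ k ∈ Finset.range K, 2^k = 2^K - 1 := by
  induction K with
  | zero => simp
  | succ K ih =>
    rw [Finset.sum_range_succ, ih]
    have : (1:ℕ) ≤ 2^K := Nat.one_le_two_pow
    omega

lemma sum_two_pow_lt {s : Finset (Fin n)} {K : ℕ}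
    (h : ∀ j ∈ s, n-1-(j:ℕ) < K) : ∑ i ∈ s, 2^(n-1-(i:ℕ)) < 2^K := by
  classical
  have hinj : ∀ a ∈ s, ∀ b ∈ s, (fun j : Fin n => n-1-(j:ℕ)) a = (fun j : Fin n => n-1-(j:ℕ)) b → a = b := by
    intro a ha b hb hab
    have ha' := a.isLt
    have hb' := b.isLt
    simp only at hab
    exact Fin.ext (by omega)
  have hsum := Finset.sum_image (f := fun k => (2:ℕ)^k) hinj
  have himg : s.image (fun j : Fin n => n-1-(j:ℕ)) ⊆ Finset.range K := by
    intro k hk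
    simp only [Finset.mem_image] at hk
    obtain ⟨j, hj, rfl⟩ := hk
    exact Finset.mem_range.2 (h j hj)
  calc ∑ i ∈ s, 2^(n-1-(i:ℕ)) = ∑ k ∈ s.image (fun j : Fin n => n-1-(j:ℕ)), 2^k := hsum.symm
    _ ≤ ∑ k ∈ Finset.range K, 2^k := Finset.sum_le_sum_of_subset himg
    _ = 2^K - 1 := sum_two_pow_range K
    _ < 2^K := by have : (1:ℕ) ≤ 2^K := Nat.one_le_two_pow; omega

lemma bitw_le (x : Finset (Fin n)) : bitw x ≤ 2^n - 1 := by
  rcases Nat.eq_zero_or_pos n with h0 | hpos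
  · subst h0; simp [bitw, Finset.eq_empty_of_isEmpty x]
  have : bitw x < 2^n := sum_two_pow_lt (fun j hj => by have := j.isLt; omega)
  omega

/-- master lemma, one direction: if `a ∈ x \ y` is below every element of `y \ x`,
then `bitw y < bitw x`. -/
lemma bitw_lt_of_min {x y : Finset (Fin n)} {a : Fin n}
    (hax : a ∈ x) (hay : a ∉ y) (hall : ∀ j ∈ y, j ∉ x → a < j) :
    bitw y < bitw x := by
  classical
  have hysplit : bitw y = (∑ i ∈ y ∩ x, 2^(n-1-(i:ℕ))) + ∑ i ∈ y \ x, 2^(n-1-(i:ℕ)) := by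
    rw [bitw, ← Finset.sum_inter_add_sum_sdiff]
  have hxsplit : (∑ i ∈ x ∩ y, 2^(n-1-(i:ℕ))) + ∑ i ∈ x \ y, 2^(n-1-(i:ℕ)) = bitw x := by
    rw [bitw, Finset.sum_inter_add_sum_sdiff]
  have hxy : (∑ i ∈ y ∩ x, 2^(n-1-(i:ℕ))) = ∑ i ∈ x ∩ y, 2^(n-1-(i:ℕ)) := by
    rw [Finset.inter_comm]
  have hsmall : ∑ i ∈ y \ x, 2^(n-1-(i:ℕ)) < 2^(n-1-(a:ℕ)) := by
    apply sum_two_pow_lt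
    intro j hj
    rcases Finset.mem_sdiff.1 hj with ⟨hjy, hjx⟩
    have hlt := hall j hjy hjx
    have : (a:ℕ) < (j:ℕ) := hlt
    have := j.isLt
    omega
  have hbig : 2^(n-1-(a:ℕ)) ≤ ∑ i ∈ x \ y, 2^(n-1-(i:ℕ)) :=
    Finset.single_le_sum (f := fun i : Fin n => 2^(n-1-(i:ℕ)))
      (fun i _ => Nat.zero_le _) (Finset.mem_sdiff.2 ⟨hax, hay⟩)
  omega

lemma bitw_injective : Function.Injective (bitw (n := n)) := by
  intro x y h
  by_contra hne
  have hsd : (symmDiff x y).Nonempty := by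
    rw [Finset.nonempty_iff_ne_empty]
    intro hc
    exact hne (by simpa [symmDiff_eq_bot] using hc)
  set a := (symmDiff x y).min' hsd with ha
  have hmem := (symmDiff x y).min'_mem hsd
  have hmin : ∀ b ∈ symmDiff x y, a ≤ b := fun b hb => (symmDiff x y).min'_le b hb
  rw [Finset.mem_symmDiff] at hmem
  rcases hmem with ⟨hax, hay⟩ | ⟨hay, hax⟩
  · have : bitw y < bitw x := bitw_lt_of_min hax hay (fun j hj hjx => by
      have : j ∈ symmDiff x y := Finset.mem_symmDiff.2 (Or.inr ⟨hj, hjx⟩)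
      have := hmin j this
      rcases lt_or_eq_of_le this with h' | h'
      · exact h'
      · exact absurd (h' ▸ hax : j ∈ x) hjx)
    omega
  · have : bitw x < bitw y := bitw_lt_of_min hay hax (fun j hj hjy => by
      have : j ∈ symmDiff x y := Finset.mem_symmDiff.2 (Or.inl ⟨hj, hjy⟩)
      have := hmin j this
      rcases lt_or_eq_of_le this with h' | h'
      · exact h'
      · exact absurd (h' ▸ hay : j ∈ y) hjy)
    omega

/-- the global key: lexicographic (card, reversed bitw). -/
def key (x : Finset (Fin n)) : ℕ := x.card * 2^n + (2^n - 1 - bitw x)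

lemma key_mod {x : Finset (Fin n)} : key x % 2^n = 2^n - 1 - bitw x ∧ key x / 2^n = x.card := by
  have hx := bitw_le x
  have h1 : (1:ℕ) ≤ 2^n := Nat.one_le_two_pow
  unfold key
  constructor
  · rw [Nat.mul_comm, Nat.mul_add_mod, Nat.mod_eq_of_lt (by omega)]
  · rw [Nat.mul_comm, Nat.mul_add_div (by omega), Nat.div_eq_of_lt (by omega)]
    omega

lemma key_lt_iff {x y : Finset (Fin n)} :
    key x < key y ↔ x.card < y.card ∨ (x.card = y.card ∧ bitw y < bitw x) := by
  have hx := bitw_le x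
  have hy := bitw_le y
  have h1 : (1:ℕ) ≤ 2^n := Nat.one_le_two_pow
  constructor
  · intro h
    rcases lt_trichotomy x.card y.card with h' | h' | h'
    · exact Or.inl h'
    · right
      refine ⟨h', ?_⟩
      unfold key at h
      rw [h'] at h
      generalize y.card * 2^n = t at h
      omega
    · exfalso
      have h2 : (y.card+1) * 2^n ≤ x.card * 2^n := Nat.mul_le_mul_right _ (by omega)
      unfold key at h
      rw [add_mul, one_mul] at h2
      omega
  · rintro (h | ⟨h1', h2⟩)
    · have h2 : (x.card+1) * 2^n ≤ y.card * 2^n := Nat.mul_le_mul_right _ (by omega)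
      unfold key
      rw [add_mul, one_mul] at h2
      omega
    · unfold key
      rw [h1']
      generalize y.card * 2^n = t
      omega

lemma key_injective : Function.Injective (key (n := n)) := by
  intro x y h
  have hm1 := key_mod (x := x)
  have hm2 := key_mod (x := y)
  have hx := bitw_le x
  have hy := bitw_le y
  have hcard : x.card = y.card := by rw [← hm1.2, ← hm2.2, h]
  have hb : bitw x = bitw y := by
    have := hm1.1
    have := hm2.1
    rw [h] at *
    omega
  exact bitw_injective hb

lemma wlexLt_iff_key {x y : Finset (Fin n)} : wlexLt x y ↔ key x < key y := by
  rw [key_lt_iff]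
  unfold wlexLt
  constructor
  · rintro (h | ⟨hc, a, hax, hay, hall⟩)
    · exact Or.inl h
    · right
      refine ⟨hc, bitw_lt_of_min hax hay ?_⟩
      intro j hj hjx
      have hmem : j ∈ symmDiff x y := Finset.mem_symmDiff.2 (Or.inr ⟨hj, hjx⟩)
      have := hall j hmem
      rcases lt_or_eq_of_le this with h' | h'
      · exact h'
      · exact absurd (h' ▸ hax : j ∈ x) hjx
  · rintro (h | ⟨hc, hb⟩)
    · exact Or.inl h
    · right
      refine ⟨hc, ?_⟩
      have hne : x ≠ y := fun he => by rw [he] at hb; omega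
      have hsd : (symmDiff x y).Nonempty := by
        rw [Finset.nonempty_iff_ne_empty]
        intro hcon
        exact hne (by simpa [symmDiff_eq_bot] using hcon)
      set a := (symmDiff x y).min' hsd with ha
      have hmem := (symmDiff x y).min'_mem hsd
      have hmin : ∀ b ∈ symmDiff x y, a ≤ b := fun b hb' => (symmDiff x y).min'_le b hb'
      rw [Finset.mem_symmDiff] at hmem
      rcases hmem with ⟨hax, hay⟩ | ⟨hay, hax⟩
      · exact ⟨a, hax, hay, hmin⟩
      · exfalso
        have : bitw x < bitw y := bitw_lt_of_min hay hax (fun j hj hjy => by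
          have : j ∈ symmDiff x y := Finset.mem_symmDiff.2 (Or.inl ⟨hj, hjy⟩)
          have := hmin j this
          rcases lt_or_eq_of_le this with h' | h'
          · exact h'
          · exact absurd (h' ▸ hay : j ∈ y) hjy)
        omega

lemma key_card_le {x y : Finset (Fin n)} (h : key x < key y) : x.card ≤ y.card := by
  rcases key_lt_iff.1 h with h' | ⟨h', _⟩ <;> omega

lemma key_lt_of_card_lt {x y : Finset (Fin n)} (h : x.card < y.card) : key x < key y :=
  key_lt_iff.2 (Or.inl h)

lemma key_le_of_bitw_ge {x y : Finset (Fin n)} (hc : x.card = y.card)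
    (hb : bitw y ≤ bitw x) : key x ≤ key y := by
  rcases eq_or_lt_of_le hb with h | h
  · have hxy : y = x := bitw_injective h
    rw [hxy]
  · exact le_of_lt (key_lt_iff.2 (Or.inr ⟨hc, h⟩))

/-! ### Part B: parity classes and initial segments -/

variable (X Y : Finset (Fin n)) (p q : ℕ)

/-- parity class of subsets of the ground set `X`. -/
def cls : Finset (Finset (Fin n)) := X.powerset.filter (fun x => x.card % 2 = p % 2)

/-- the initial segment of the weightlex order on `cls X p` with (at most) `m` elements. -/
def iseg (m : ℕ) : Finset (Finset (Fin n)) :=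
  (cls X p).filter (fun x => ((cls X p).filter (fun y => key y < key x)).card < m)

variable {X Y p q}

lemma mem_cls {z : Finset (Fin n)} : z ∈ cls X p ↔ z ⊆ X ∧ z.card % 2 = p % 2 := by
  simp [cls]

lemma iseg_subset_cls {m : ℕ} : iseg X p m ⊆ cls X p := Finset.filter_subset _ _

lemma iseg_dc {m : ℕ} {x y : Finset (Fin n)} (hx : x ∈ iseg X p m)
    (hy : y ∈ cls X p) (hk : key y < key x) : y ∈ iseg X p m := by
  rw [iseg, Finset.mem_filter] at hx ⊢
  refine ⟨hy, lt_of_le_of_lt ?_ hx.2⟩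
  apply Finset.card_le_card
  intro z hz
  rw [Finset.mem_filter] at hz ⊢
  exact ⟨hz.1, lt_trans hz.2 hk⟩

lemma exists_key_min {𝒜 : Finset (Finset (Fin n))} (h : 𝒜.Nonempty) :
    ∃ x ∈ 𝒜, ∀ y ∈ 𝒜, key x ≤ key y := by
  classical
  obtain ⟨k, hk, hmin⟩ := Finset.exists_min_image 𝒜 key h
  exact ⟨k, hk, hmin⟩

lemma iseg_card {m : ℕ} : (iseg X p m).card = min m (cls X p).card := by
  classical
  apply le_antisymm
  · apply le_min
    · -- rank map into range m
      have : ∀ a ∈ iseg X p m, ((cls X p).filter (fun y => key y < key a)).card ∈ Finset.range m := by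
        intro a ha
        rw [iseg, Finset.mem_filter] at ha
        exact Finset.mem_range.2 ha.2
      have hinj : ∀ a ∈ iseg X p m, ∀ b ∈ iseg X p m,
          ((cls X p).filter (fun y => key y < key a)).card = ((cls X p).filter (fun y => key y < key b)).card → a = b := by
        intro a ha b hb hab
        by_contra hne
        rcases lt_trichotomy (key a) (key b) with h' | h' | h'
        · have hsub : (cls X p).filter (fun y => key y < key a) ⊂ (cls X p).filter (fun y => key y < key b) := by
            constructor
            · intro z hz
              rw [Finset.mem_filter] at hz ⊢
              exact ⟨hz.1, lt_trans hz.2 h'⟩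
            · intro hcon
              have : a ∈ (cls X p).filter (fun y => key y < key a) := by
                apply hcon
                rw [Finset.mem_filter]
                exact ⟨iseg_subset_cls ha, h'⟩
              rw [Finset.mem_filter] at this
              omega
          have := Finset.card_lt_card hsub
          omega
        · exact hne (key_injective h')
        · have hsub : (cls X p).filter (fun y => key y < key b) ⊂ (cls X p).filter (fun y => key y < key a) := by
            constructor
            · intro z hz
              rw [Finset.mem_filter] at hz ⊢
              exact ⟨hz.1, lt_trans hz.2 h'⟩
            · intro hcon
              have : b ∈ (cls X p).filter (fun y => key y < key b) := by
                apply hcon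
                rw [Finset.mem_filter]
                exact ⟨iseg_subset_cls hb, h'⟩
              rw [Finset.mem_filter] at this
              omega
          have := Finset.card_lt_card hsub
          omega
      have := Finset.card_le_card_of_injOn _ this (fun a ha b hb hab => hinj a ha b hb hab)
      simpa using this
    · exact Finset.card_le_card iseg_subset_cls
  · by_contra hlt
    push_neg at hlt
    have hne : ((cls X p) \ iseg X p m).Nonempty := by
      rw [← Finset.card_pos, Finset.card_sdiff_of_subset iseg_subset_cls]
      omega
    obtain ⟨x₀, hx₀, hmin⟩ := exists_key_min hne
    rw [Finset.mem_sdiff] at hx₀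
    have hsub : (cls X p).filter (fun y => key y < key x₀) ⊆ iseg X p m := by
      intro z hz
      rw [Finset.mem_filter] at hz
      by_contra hzout
      have hzmem : z ∈ (cls X p) \ iseg X p m := Finset.mem_sdiff.2 ⟨hz.1, hzout⟩
      have := hmin z hzmem
      omega
    have hcard : ((cls X p).filter (fun y => key y < key x₀)).card < m := by
      have := Finset.card_le_card hsub
      omega
    exact hx₀.2 (by rw [iseg, Finset.mem_filter]; exact ⟨hx₀.1, hcard⟩)

lemma iseg_key_lt {m : ℕ} {x y : Finset (Fin n)} (hx : x ∈ iseg X p m)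
    (hy : y ∈ cls X p) (hyout : y ∉ iseg X p m) : key x < key y := by
  rcases lt_trichotomy (key x) (key y) with h | h | h
  · exact h
  · exact absurd (key_injective h ▸ hx) hyout
  · exact absurd (iseg_dc hx hy h) hyout

/-- any set which is downward closed in `cls X p` is an initial segment. -/
lemma initial_eq_iseg {S : Finset (Finset (Fin n))} (hS : S ⊆ cls X p)
    (hdc : ∀ x ∈ S, ∀ y ∈ cls X p, key y < key x → y ∈ S) :
    S = iseg X p S.card := by
  classical
  have hcard : (iseg X p S.card).card = S.card := by
    rw [iseg_card]
    exact min_eq_left (Finset.card_le_card hS)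
  have hsub : S ⊆ iseg X p S.card ∨ iseg X p S.card ⊆ S := by
    by_contra hc
    push_neg at hc
    obtain ⟨hc1, hc2⟩ := hc
    obtain ⟨a, haS, haI⟩ := Finset.not_subset.1 hc1
    obtain ⟨b, hbI, hbS⟩ := Finset.not_subset.1 hc2
    have hne : a ≠ b := fun h => haI (h ▸ hbI)
    rcases lt_trichotomy (key a) (key b) with h | h | h
    · exact haI (iseg_dc hbI (hS haS) h)
    · exact hne (key_injective h)
    · exact hbS (hdc a haS b (iseg_subset_cls hbI) h)
  rcases hsub with h | h
  · exact Finset.eq_of_subset_of_card_le h (le_of_eq hcard)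
  · exact (Finset.eq_of_subset_of_card_le h (le_of_eq hcard.symm)).symm

/-- two downward-closed subsets of the same class are nested. -/
lemma dc_subset_total {U W : Finset (Finset (Fin n))} (hU : U ⊆ cls X p) (hW : W ⊆ cls X p)
    (hdcU : ∀ x ∈ U, ∀ y ∈ cls X p, key y < key x → y ∈ U)
    (hdcW : ∀ x ∈ W, ∀ y ∈ cls X p, key y < key x → y ∈ W) :
    U ⊆ W ∨ W ⊆ U := by
  by_contra hc
  push_neg at hc
  obtain ⟨hc1, hc2⟩ := hc
  obtain ⟨a, haU, haW⟩ := Finset.not_subset.1 hc1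
  obtain ⟨b, hbW, hbU⟩ := Finset.not_subset.1 hc2
  have hne : a ≠ b := fun h => haW (h ▸ hbW)
  rcases lt_trichotomy (key a) (key b) with h | h | h
  · exact haW (hdcW b hbW a (hU haU) h)
  · exact hne (key_injective h)
  · exact hbU (hdcU a haU b (hW hbW) h)

/-- the initial segment admits a key-decreasing matching into any family of the same size. -/
lemma exists_match {T : Finset (Finset (Fin n))} (hT : T ⊆ cls X p) :
    ∃ f : Finset (Fin n) → Finset (Fin n),
      (∀ t ∈ T, f t ∈ iseg X p T.card ∧ key (f t) ≤ key t) ∧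
      T.image f = iseg X p T.card := by
  classical
  generalize hd : (T \ iseg X p T.card).card = d
  induction d using Nat.strong_induction_on generalizing T with
  | _ d ih =>
    by_cases heq : T = iseg X p T.card
    · refine ⟨id, fun t ht => ⟨heq ▸ ht, le_refl _⟩, by simp [heq.symm]⟩
    · have hcardI : (iseg X p T.card).card = T.card := by
        rw [iseg_card]; exact min_eq_left (Finset.card_le_card hT)
      have hTd : (T \ iseg X p T.card).Nonempty := by
        rw [← Finset.card_pos]
        by_contra hz
        push_neg at hz
        have : T ⊆ iseg X p T.card := by
          rw [← Finset.sdiff_eq_empty_iff_subset]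
          exact Finset.card_eq_zero.1 (by omega)
        exact heq (Finset.eq_of_subset_of_card_le this (le_of_eq hcardI))
      have hId : (iseg X p T.card \ T).Nonempty := by
        rw [← Finset.card_pos]
        by_contra hz
        push_neg at hz
        have : iseg X p T.card ⊆ T := by
          rw [← Finset.sdiff_eq_empty_iff_subset]
          exact Finset.card_eq_zero.1 (by omega)
        exact heq (Finset.eq_of_subset_of_card_le this (le_of_eq hcardI.symm)).symm
      obtain ⟨a, ha⟩ := hTd
      obtain ⟨b, hb⟩ := hId
      rw [Finset.mem_sdiff] at ha hb
      have hba : key b < key a := iseg_key_lt hb.1 (hT ha.1) ha.2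
      set T' := insert b (T.erase a) with hT'
      have haT : a ∈ T := ha.1
      have hbT : b ∉ T := hb.2
      have hT'card : T'.card = T.card := by
        rw [hT', Finset.card_insert_of_notMem (fun h => hbT (Finset.mem_of_mem_erase h)),
          Finset.card_erase_of_mem haT]
        have : 1 ≤ T.card := Finset.card_pos.2 ⟨a, haT⟩
        omega
      have hT'sub : T' ⊆ cls X p := by
        intro z hz
        rw [hT', Finset.mem_insert] at hz
        rcases hz with rfl | hz
        · exact iseg_subset_cls hb.1
        · exact hT (Finset.mem_of_mem_erase hz)
      have hT'sd : (T' \ iseg X p T'.card).card < d := by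
        rw [hT'card]
        have : T' \ iseg X p T.card = (T \ iseg X p T.card).erase a := by
          ext z
          rw [hT']
          simp only [Finset.mem_sdiff, Finset.mem_erase, Finset.mem_insert, Finset.mem_erase,
            Finset.mem_sdiff]
          constructor
          · rintro ⟨rfl | ⟨hza, hzT⟩, hzI⟩
            · exact absurd hb.1 hzI
            · exact ⟨hza, hzT, hzI⟩
          · rintro ⟨hza, hzT, hzI⟩
            exact ⟨Or.inr ⟨hza, hzT⟩, hzI⟩
        rw [this, Finset.card_erase_of_mem (Finset.mem_sdiff.2 ha), hd]
        have : 0 < d := hd ▸ Finset.card_pos.2 ⟨a, Finset.mem_sdiff.2 ha⟩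
        omega
      obtain ⟨f, hf1, hf2⟩ := ih _ (hd ▸ hT'sd) hT'sub rfl
      rw [hT'card] at hf1 hf2
      refine ⟨fun t => if t = a then f b else f t, ?_, ?_⟩
      · intro t ht
        by_cases hta : t = a
        · subst hta
          simp only [if_pos rfl]
          have hbT' : b ∈ T' := Finset.mem_insert_self _ _
          obtain ⟨h1, h2⟩ := hf1 b hbT'
          exact ⟨h1, le_trans h2 (le_of_lt hba)⟩
        · simp only [if_neg hta]
          have htT' : t ∈ T' := by
            rw [hT']
            exact Finset.mem_insert_of_mem (Finset.mem_erase.2 ⟨hta, ht⟩)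
          exact hf1 t htT'
      · have himg : T.image (fun t => if t = a then f b else f t) = T'.image f := by
          ext z
          simp only [Finset.mem_image]
          constructor
          · rintro ⟨t, ht, rfl⟩
            by_cases hta : t = a
            · subst hta
              simp only [if_pos rfl]
              exact ⟨b, Finset.mem_insert_self _ _, rfl⟩
            · simp only [if_neg hta]
              exact ⟨t, Finset.mem_insert_of_mem (Finset.mem_erase.2 ⟨hta, ht⟩), rfl⟩
          · rintro ⟨t, ht, rfl⟩
            rw [hT', Finset.mem_insert] at ht
            rcases ht with rfl | ht
            · exact ⟨a, haT, by simp⟩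
            · rw [Finset.mem_erase] at ht
              refine ⟨t, ht.2, by simp [if_neg ht.1]⟩
        rw [himg, hf2]

/-! ### Part C: neighborhoods -/

/-- neighborhood of a family inside the ground set `X`. -/
def NB (X : Finset (Fin n)) (S : Finset (Finset (Fin n))) : Finset (Finset (Fin n)) :=
  X.powerset.filter (fun w => ∃ x ∈ S, (symmDiff x w).card = 1)

lemma mem_NB {X : Finset (Fin n)} {S : Finset (Finset (Fin n))} {w : Finset (Fin n)} :
    w ∈ NB X S ↔ w ⊆ X ∧ ∃ x ∈ S, (symmDiff x w).card = 1 := by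
  simp [NB]

lemma NB_mono {X : Finset (Fin n)} {S T : Finset (Finset (Fin n))} (h : S ⊆ T) :
    NB X S ⊆ NB X T := by
  intro w hw
  rw [mem_NB] at hw ⊢
  obtain ⟨h1, x, hx, h2⟩ := hw
  exact ⟨h1, x, h hx, h2⟩

lemma NB_union {X : Finset (Fin n)} {S T : Finset (Finset (Fin n))} :
    NB X (S ∪ T) = NB X S ∪ NB X T := by
  ext w
  rw [Finset.mem_union, mem_NB, mem_NB, mem_NB]
  constructor
  · rintro ⟨h1, x, hx, h2⟩
    rcases Finset.mem_union.1 hx with hx | hx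
    · exact Or.inl ⟨h1, x, hx, h2⟩
    · exact Or.inr ⟨h1, x, hx, h2⟩
  · rintro (⟨h1, x, hx, h2⟩ | ⟨h1, x, hx, h2⟩)
    · exact ⟨h1, x, Finset.mem_union_left _ hx, h2⟩
    · exact ⟨h1, x, Finset.mem_union_right _ hx, h2⟩

lemma eq_erase_of_symmDiff {x w : Finset (Fin n)} {d : Fin n}
    (h : symmDiff x w = {d}) (hd : d ∈ x) : w = x.erase d := by
  have hds : d ∈ symmDiff x w := by rw [h]; simp
  rw [Finset.mem_symmDiff] at hds
  have hdw : d ∉ w := by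
    rcases hds with ⟨_, h2⟩ | ⟨_, h2⟩
    · exact h2
    · exact absurd hd h2
  ext j
  by_cases hj : j = d
  · subst hj
    simp only [Finset.mem_erase, ne_eq, not_true_eq_false, false_and, iff_false]
    exact hdw
  · have hjs : j ∉ symmDiff x w := by rw [h]; simp [hj]
    rw [Finset.mem_symmDiff] at hjs
    push_neg at hjs
    simp only [Finset.mem_erase, ne_eq, hj, not_false_iff, true_and]
    exact ⟨fun hjw => hjs.2 hjw, fun hjx => hjs.1 hjx⟩

lemma eq_insert_of_symmDiff {x w : Finset (Fin n)} {d : Fin n}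
    (h : symmDiff x w = {d}) (hd : d ∉ x) : w = insert d x := by
  have hds : d ∈ symmDiff x w := by rw [h]; simp
  rw [Finset.mem_symmDiff] at hds
  have hdw : d ∈ w := by
    rcases hds with ⟨h1, _⟩ | ⟨h1, _⟩
    · exact absurd h1 hd
    · exact h1
  ext j
  by_cases hj : j = d
  · subst hj
    simp [hdw]
  · have hjs : j ∉ symmDiff x w := by rw [h]; simp [hj]
    rw [Finset.mem_symmDiff] at hjs
    push_neg at hjs
    simp only [Finset.mem_insert, hj, false_or]
    exact ⟨fun hjw => hjs.2 hjw, fun hjx => hjs.1 hjx⟩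

lemma symmDiff_erase_self {x : Finset (Fin n)} {d : Fin n} (hd : d ∈ x) :
    symmDiff x (x.erase d) = {d} := by
  ext j
  rw [Finset.mem_symmDiff, Finset.mem_singleton, Finset.mem_erase]
  by_cases hj : j = d
  · subst hj; tauto
  · tauto

lemma symmDiff_insert_self {x : Finset (Fin n)} {d : Fin n} (hd : d ∉ x) :
    symmDiff x (insert d x) = {d} := by
  ext j
  rw [Finset.mem_symmDiff, Finset.mem_singleton, Finset.mem_insert]
  by_cases hj : j = d
  · subst hj; tauto
  · tauto

/-- characterization of adjacency. -/
lemma adj_iff {x w : Finset (Fin n)} :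
    (symmDiff x w).card = 1 ↔ (∃ d ∈ x, w = x.erase d) ∨ (∃ d, d ∉ x ∧ w = insert d x) := by
  constructor
  · intro h
    obtain ⟨d, hd⟩ := Finset.card_eq_one.1 h
    by_cases hdx : d ∈ x
    · exact Or.inl ⟨d, hdx, eq_erase_of_symmDiff hd hdx⟩
    · exact Or.inr ⟨d, hdx, eq_insert_of_symmDiff hd hdx⟩
  · rintro (⟨d, hd, rfl⟩ | ⟨d, hd, rfl⟩)
    · rw [symmDiff_erase_self hd]; simp
    · rw [symmDiff_insert_self hd]; simp

lemma adj_parity {x w : Finset (Fin n)} (h : (symmDiff x w).card = 1) :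
    (x.card + w.card) % 2 = 1 := by
  rcases adj_iff.1 h with ⟨d, hd, rfl⟩ | ⟨d, hd, rfl⟩
  · rw [Finset.card_erase_of_mem hd]
    have : 1 ≤ x.card := Finset.card_pos.2 ⟨d, hd⟩
    omega
  · rw [Finset.card_insert_of_notMem hd]
    omega

lemma NB_subset_cls {X : Finset (Fin n)} {p : ℕ} {S : Finset (Finset (Fin n))}
    (hS : S ⊆ cls X p) : NB X S ⊆ cls X (p+1) := by
  intro w hw
  rw [mem_NB] at hw
  obtain ⟨h1, x, hx, h2⟩ := hw
  rw [mem_cls]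
  refine ⟨h1, ?_⟩
  have hpar := adj_parity h2
  have hxp := (mem_cls.1 (hS hx)).2
  omega

lemma NB_singleton_card {X v : Finset (Fin n)} (hv : v ⊆ X) :
    (NB X {v}).card = X.card := by
  classical
  symm
  apply Finset.card_bij (fun (i : Fin n) _ => symmDiff v {i})
  · intro i hi
    rw [mem_NB]
    constructor
    · intro j hj
      rw [Finset.mem_symmDiff] at hj
      rcases hj with ⟨hj, _⟩ | ⟨hj, _⟩
      · exact hv hj
      · rwa [Finset.mem_singleton.1 hj]
    · refine ⟨v, Finset.mem_singleton_self v, ?_⟩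
      rw [symmDiff_symmDiff_cancel_left]
      simp
  · intro a ha b hb hab
    have : ({a} : Finset (Fin n)) = {b} := by
      have := congrArg (fun t => symmDiff v t) hab
      simpa [symmDiff_symmDiff_cancel_left] using this
    simpa using this
  · intro w hw
    rw [mem_NB] at hw
    obtain ⟨h1, x, hx, h2⟩ := hw
    rw [Finset.mem_singleton] at hx
    subst hx
    obtain ⟨d, hd⟩ := Finset.card_eq_one.1 h2
    refine ⟨d, ?_, ?_⟩
    · have hdm : d ∈ symmDiff x w := by rw [hd]; simp
      rw [Finset.mem_symmDiff] at hdm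
      rcases hdm with ⟨h', _⟩ | ⟨h', _⟩
      · exact hv h'
      · exact h1 h'
    · rw [← hd, symmDiff_symmDiff_cancel_left]

/-- key monotonicity of subsets under erasing the max: the central lex lemma. -/
lemma lexDown {w w' : Finset (Fin n)} (hne : w'.Nonempty) (hc : w.card = w'.card)
    (hb : bitw w ≤ bitw w') {c : Fin n} (hcw : c ∈ w) :
    bitw (w.erase c) ≤ bitw (w'.erase (w'.max' hne)) := by
  classical
  set M := w'.max' hne with hM
  have hMw' : M ∈ w' := w'.max'_mem hne
  set A := w'.erase M with hA
  set B := w.erase c with hB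
  by_cases hAB : B = A
  · rw [hAB]
  have hsd : (symmDiff A B).Nonempty := by
    rw [Finset.nonempty_iff_ne_empty]
    intro hcon
    have hereq : A = B := by simpa [symmDiff_eq_bot] using hcon
    exact hAB hereq.symm
  set d := (symmDiff A B).min' hsd with hdd
  have hdmem := (symmDiff A B).min'_mem hsd
  have hdmin : ∀ j ∈ symmDiff A B, d ≤ j := fun j hj => (symmDiff A B).min'_le j hj
  suffices hdA : d ∈ A ∧ d ∉ B by
    refine le_of_lt (bitw_lt_of_min hdA.1 hdA.2 ?_)
    intro j hj hjA
    have hjm : j ∈ symmDiff A B := Finset.mem_symmDiff.2 (Or.inr ⟨hj, hjA⟩)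
    have := hdmin j hjm
    rcases lt_or_eq_of_le this with h' | h'
    · exact h'
    · exact absurd (h' ▸ hj : d ∈ B) hdA.2
  rw [Finset.mem_symmDiff] at hdmem
  rcases hdmem with ⟨h1, h2⟩ | ⟨hdB, hdA⟩
  · exact ⟨h1, h2⟩
  exfalso
  have hdw : d ∈ w := Finset.mem_of_mem_erase hdB
  have hdc : d ≠ c := (Finset.mem_erase.1 hdB).1
  by_cases hww : w = w'
  · -- w = w'
    have hdM : d = M := by
      by_contra hcon
      exact hdA (Finset.mem_erase.2 ⟨hcon, hww ▸ hdw⟩)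
    have hcM : c ≠ M := fun h => hAB (by rw [hB, hA, ← hww, h])
    have hcA : c ∈ A := Finset.mem_erase.2 ⟨hcM, hww ▸ hcw⟩
    have hcB : c ∉ B := Finset.notMem_erase c w
    have h1 : d ≤ c := hdmin c (Finset.mem_symmDiff.2 (Or.inl ⟨hcA, hcB⟩))
    have h2 : c ≤ M := w'.le_max' c (hww ▸ hcw)
    rw [hdM] at h1
    exact hcM (le_antisymm h2 h1)
  · have hbw : bitw w < bitw w' := lt_of_le_of_ne hb (fun h => hww (bitw_injective h))
    have hsd2 : (symmDiff w w').Nonempty := by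
      rw [Finset.nonempty_iff_ne_empty]
      intro hcon
      exact hww (by simpa [symmDiff_eq_bot] using hcon)
    set m₂ := (symmDiff w w').min' hsd2 with hm₂d
    have hm₂mem := (symmDiff w w').min'_mem hsd2
    have hm₂min : ∀ j ∈ symmDiff w w', m₂ ≤ j := fun j hj => (symmDiff w w').min'_le j hj
    have hm₂ : m₂ ∈ w' ∧ m₂ ∉ w := by
      rw [Finset.mem_symmDiff] at hm₂mem
      rcases hm₂mem with ⟨h1, h2⟩ | ⟨h1, h2⟩
      · exfalso
        have : bitw w' < bitw w := bitw_lt_of_min h1 h2 (fun j hj hjw => by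
          have : j ∈ symmDiff w w' := Finset.mem_symmDiff.2 (Or.inr ⟨hj, hjw⟩)
          have := hm₂min j this
          rcases lt_or_eq_of_le this with h' | h'
          · exact h'
          · exact absurd (h' ▸ h1 : j ∈ w) hjw)
        omega
      · exact ⟨h1, h2⟩
    by_cases hdw' : d ∈ w'
    · have hdM : d = M := by
        by_contra hcon
        exact hdA (Finset.mem_erase.2 ⟨hcon, hdw'⟩)
      have hMw : M ∈ w := hdM ▸ hdw
      have hm₂M : m₂ ≠ M := fun h => hm₂.2 (h ▸ hMw)
      have hm₂A : m₂ ∈ A := Finset.mem_erase.2 ⟨hm₂M, hm₂.1⟩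
      have hm₂B : m₂ ∉ B := fun h => hm₂.2 (Finset.mem_of_mem_erase h)
      have h1 : d ≤ m₂ := hdmin m₂ (Finset.mem_symmDiff.2 (Or.inl ⟨hm₂A, hm₂B⟩))
      have h2 : m₂ ≤ M := w'.le_max' m₂ hm₂.1
      rw [hdM] at h1
      exact hm₂M (le_antisymm h2 h1)
    · have hdsym : d ∈ symmDiff w w' := Finset.mem_symmDiff.2 (Or.inl ⟨hdw, hdw'⟩)
      have hm₂d' : m₂ < d := by
        rcases lt_or_eq_of_le (hm₂min d hdsym) with h' | h'
        · exact h'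
        · exact absurd (h' ▸ hdw : m₂ ∈ w) hm₂.2
      by_cases hm₂M : m₂ = M
      · -- A ⊆ w
        have hAsub : A ⊆ w := by
          intro j hj
          rw [hA, Finset.mem_erase] at hj
          by_contra hjw
          have hjs : j ∈ symmDiff w w' := Finset.mem_symmDiff.2 (Or.inr ⟨hj.2, hjw⟩)
          have h1 := hm₂min j hjs
          have h2 : j ≤ M := w'.le_max' j hj.2
          rw [hm₂M] at h1
          exact hj.1 (le_antisymm h2 h1)
        have hAcard : A.card + 1 = w.card := by
          rw [hA, Finset.card_erase_of_mem hMw', hc]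
          have : 1 ≤ w'.card := Finset.card_pos.2 hne
          omega
        have hcards : (w \ A).card = 1 := by
          rw [Finset.card_sdiff_of_subset hAsub]
          omega
        obtain ⟨e, he⟩ := Finset.card_eq_one.1 hcards
        have hew : e ∈ w ∧ e ∉ A := by
          have : e ∈ w \ A := he ▸ Finset.mem_singleton_self e
          exact Finset.mem_sdiff.1 this
        have hde : d = e := by
          have hdnA : d ∉ A := hdA
          have : d ∈ w \ A := Finset.mem_sdiff.2 ⟨hdw, hdnA⟩
          rw [he] at this
          exact Finset.mem_singleton.1 this
        have hce : c ≠ e := fun h => hdc (hde.trans h.symm)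
        have hcA : c ∈ A := by
          by_contra hcon
          have : c ∈ w \ A := Finset.mem_sdiff.2 ⟨hcw, hcon⟩
          rw [he] at this
          exact hce (Finset.mem_singleton.1 this)
        have hcB : c ∉ B := Finset.notMem_erase c w
        have hdlec : d ≤ c := hdmin c (Finset.mem_symmDiff.2 (Or.inl ⟨hcA, hcB⟩))
        have heM : e ≠ M := by
          intro h
          have : M ∈ w := h ▸ hew.1
          exact hm₂.2 (hm₂M ▸ this)
        have hew' : e ∉ w' := fun h => hew.2 (Finset.mem_erase.2 ⟨heM, h⟩)
        have hMe : M < e := by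
          have : e ∈ symmDiff w w' := Finset.mem_symmDiff.2 (Or.inl ⟨hew.1, hew'⟩)
          have h1 := hm₂min e this
          rw [hm₂M] at h1
          rcases lt_or_eq_of_le h1 with h' | h'
          · exact h'
          · exact absurd h'.symm heM
        have hcM : c ≤ M := w'.le_max' c (Finset.mem_of_mem_erase hcA)
        rw [hde] at hdlec
        have : e < e := lt_of_le_of_lt (le_trans hdlec hcM) hMe
        exact lt_irrefl e this
      · have hm₂A : m₂ ∈ A := Finset.mem_erase.2 ⟨hm₂M, hm₂.1⟩
        have hm₂B : m₂ ∉ B := fun h => hm₂.2 (Finset.mem_of_mem_erase h)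
        have h1 : d ≤ m₂ := hdmin m₂ (Finset.mem_symmDiff.2 (Or.inl ⟨hm₂A, hm₂B⟩))
        exact lt_irrefl d (lt_of_le_of_lt h1 hm₂d')

/-- core of the neighborhood-initial-segment lemma: given `w' <_key w` in the same class and
`y` adjacent to `w`, produce `y'` adjacent to `w'` with `key y' ≤ key y`. -/
lemma NIcore {X w w' y : Finset (Fin n)} (hwX : w ⊆ X) (hw'X : w' ⊆ X) (hyX : y ⊆ X)
    (hpar : w.card % 2 = w'.card % 2) (hk : key w' < key w)
    (hadj : (symmDiff y w).card = 1) :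
    ∃ y', y' ⊆ X ∧ (symmDiff y' w').card = 1 ∧ key y' ≤ key y := by
  classical
  rw [symmDiff_comm] at hadj
  have hwne : w ≠ w' := fun h => by rw [h] at hk; omega
  by_cases hne' : w' = ∅
  · -- w' empty : use a singleton of the minimum of X
    subst hne'
    have hwcard : 2 ≤ w.card := by
      have h0 : w.card ≠ 0 := fun h => hwne (Finset.card_eq_zero.1 h)
      simp only [Finset.card_empty] at hpar
      omega
    have hXne : X.Nonempty := by
      obtain ⟨a, ha⟩ := Finset.card_pos.1 (by omega : 0 < w.card)
      exact ⟨a, hwX ha⟩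
    set o := X.min' hXne with ho
    have hoX : o ∈ X := X.min'_mem hXne
    refine ⟨{o}, Finset.singleton_subset_iff.2 hoX, ?_, ?_⟩
    · have h1 : symmDiff ({o} : Finset (Fin n)) ∅ = {o} := by
        rw [show (∅ : Finset (Fin n)) = (⊥ : Finset (Fin n)) from rfl, symmDiff_bot]
      rw [h1, Finset.card_singleton]
    · rcases adj_iff.1 hadj with ⟨dd, hd, rfl⟩ | ⟨dd, hd, rfl⟩
      · -- y = w.erase dd
        rcases lt_or_eq_of_le (by omega : 2 ≤ w.card) with h2 | h2
        · apply le_of_lt (key_lt_of_card_lt ?_)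
          rw [Finset.card_erase_of_mem hd, Finset.card_singleton]
          omega
        · -- w.card = 2, y is a singleton
          have hycard : (w.erase dd).card = 1 := by
            rw [Finset.card_erase_of_mem hd]
            omega
          obtain ⟨e, he⟩ := Finset.card_eq_one.1 hycard
          rw [he]
          have heX : e ∈ X := by
            have : e ∈ w.erase dd := he ▸ Finset.mem_singleton_self e
            exact hwX (Finset.mem_of_mem_erase this)
          apply key_le_of_bitw_ge
          · simp
          · have hoe : o ≤ e := X.min'_le e heX
            have h1 : bitw ({e} : Finset (Fin n)) = 2^(n-1-(e:ℕ)) := by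
              simp [bitw]
            have h2 : bitw ({o} : Finset (Fin n)) = 2^(n-1-(o:ℕ)) := by
              simp [bitw]
            rw [h1, h2]
            apply Nat.pow_le_pow_right (by omega)
            have : (o:ℕ) ≤ (e:ℕ) := hoe
            omega
      · -- y = insert dd w : card ≥ 3
        apply le_of_lt (key_lt_of_card_lt ?_)
        rw [Finset.card_insert_of_notMem hd, Finset.card_singleton]
        omega
  · have hne : w'.Nonempty := Finset.nonempty_iff_ne_empty.2 hne'
    set M := w'.max' hne with hM
    refine ⟨w'.erase M, le_trans (Finset.erase_subset M w') hw'X, ?_, ?_⟩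
    · rw [symmDiff_comm, symmDiff_erase_self (w'.max'_mem hne)]
      simp
    · have hcle : w'.card ≤ w.card := key_card_le hk
      have hw'pos : 1 ≤ w'.card := Finset.card_pos.2 hne
      have hecard : (w'.erase M).card + 1 = w'.card := by
        rw [Finset.card_erase_of_mem (w'.max'_mem hne)]
        omega
      rcases adj_iff.1 hadj with ⟨dd, hd, rfl⟩ | ⟨dd, hd, rfl⟩
      · -- y = w.erase dd
        rcases lt_or_eq_of_le hcle with hlt | heq
        · -- strictly smaller card, parity forces ≤ card w - 2
          apply le_of_lt (key_lt_of_card_lt ?_)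
          rw [Finset.card_erase_of_mem hd]
          omega
        · -- equal cards : use lexDown
          have hbw : bitw w < bitw w' := by
            rcases key_lt_iff.1 hk with h' | ⟨h', h2⟩
            · omega
            · exact h2
          have := lexDown hne heq.symm (le_of_lt hbw) hd
          apply key_le_of_bitw_ge
          · rw [Finset.card_erase_of_mem hd]
            omega
          · exact this
      · -- y = insert dd w : strictly bigger card
        apply le_of_lt (key_lt_of_card_lt ?_)
        rw [Finset.card_insert_of_notMem hd]
        omega

/-- the neighborhood of an initial segment is downward closed in the opposite class. -/
lemma NB_iseg_dc {X : Finset (Fin n)} {q m : ℕ} {w w' : Finset (Fin n)}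
    (hw : w ∈ NB X (iseg X q m)) (hw' : w' ∈ cls X (q+1)) (hk : key w' < key w) :
    w' ∈ NB X (iseg X q m) := by
  classical
  rw [mem_NB] at hw
  obtain ⟨hwX, x, hx, hadj⟩ := hw
  have hwcls : w ∈ cls X (q+1) := NB_subset_cls iseg_subset_cls (mem_NB.2 ⟨hwX, x, hx, hadj⟩)
  have hpar : w.card % 2 = w'.card % 2 := by
    rw [(mem_cls.1 hwcls).2, (mem_cls.1 hw').2]
  have hxX : x ⊆ X := (mem_cls.1 (iseg_subset_cls hx)).1
  obtain ⟨y', hy'X, hy'adj, hy'key⟩ :=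
    NIcore hwX (mem_cls.1 hw').1 hxX hpar hk hadj
  have hy'cls : y' ∈ cls X q := by
    rw [mem_cls]
    refine ⟨hy'X, ?_⟩
    have hp1 := adj_parity hy'adj
    have hp2 := (mem_cls.1 hw').2
    have hp3 := (mem_cls.1 (iseg_subset_cls hx)).2
    have hp4 := adj_parity (show (symmDiff x w).card = 1 from hadj)
    have hp5 := (mem_cls.1 hwcls).2
    omega
  have hy'iseg : y' ∈ iseg X q m := by
    rcases lt_or_eq_of_le hy'key with h' | h'
    · exact iseg_dc hx hy'cls h'
    · rwa [key_injective h']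
  rw [mem_NB]
  exact ⟨(mem_cls.1 hw').1, y', hy'iseg, hy'adj⟩

/-! ### Part D: sections along a coordinate and the decomposition lemma -/

/-- section of a family: members not containing `i`. -/
def sec0 (i : Fin n) (T : Finset (Finset (Fin n))) : Finset (Finset (Fin n)) :=
  T.filter (fun x => i ∉ x)

/-- section of a family: members containing `i`, with `i` removed. -/
def sec1 (i : Fin n) (T : Finset (Finset (Fin n))) : Finset (Finset (Fin n)) :=
  (T.filter (fun x => i ∈ x)).image (fun x => x.erase i)

lemma erase_injOn_filter {i : Fin n} {T : Finset (Finset (Fin n))} :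
    ∀ a ∈ T.filter (fun x => i ∈ x), ∀ b ∈ T.filter (fun x => i ∈ x),
      a.erase i = b.erase i → a = b := by
  intro a ha b hb hab
  rw [Finset.mem_filter] at ha hb
  rw [← Finset.insert_erase ha.2, hab, Finset.insert_erase hb.2]

lemma sec_card {i : Fin n} {T : Finset (Finset (Fin n))} :
    (sec0 i T).card + (sec1 i T).card = T.card := by
  rw [sec0, sec1, Finset.card_image_of_injOn (fun a ha b hb hab => erase_injOn_filter a ha b hb hab)]
  rw [add_comm]
  exact Finset.card_filter_add_card_filter_not (p := fun x => i ∈ x)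

lemma sec0_subset_cls {X : Finset (Fin n)} {i : Fin n} {p : ℕ} {T : Finset (Finset (Fin n))}
    (hT : T ⊆ cls X p) : sec0 i T ⊆ cls (X.erase i) p := by
  intro z hz
  rw [sec0, Finset.mem_filter] at hz
  obtain ⟨hzT, hzi⟩ := hz
  rw [mem_cls] at *
  exact ⟨Finset.subset_erase.2 ⟨(hT hzT |> mem_cls.1).1, hzi⟩, (hT hzT |> mem_cls.1).2⟩

lemma sec1_subset_cls {X : Finset (Fin n)} {i : Fin n} {p : ℕ} {T : Finset (Finset (Fin n))}
    (hT : T ⊆ cls X p) : sec1 i T ⊆ cls (X.erase i) (p+1) := by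
  intro z hz
  rw [sec1, Finset.mem_image] at hz
  obtain ⟨x, hx, rfl⟩ := hz
  rw [Finset.mem_filter] at hx
  obtain ⟨hxT, hxi⟩ := hx
  have h1 := mem_cls.1 (hT hxT)
  rw [mem_cls]
  constructor
  · exact Finset.erase_subset_erase i h1.1
  · rw [Finset.card_erase_of_mem hxi]
    have : 1 ≤ x.card := Finset.card_pos.2 ⟨i, hxi⟩
    have := h1.2
    omega

lemma symmDiff_erase_both {x w : Finset (Fin n)} {i : Fin n} (hx : i ∈ x) (hw : i ∈ w) :
    symmDiff (x.erase i) (w.erase i) = symmDiff x w := by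
  ext j
  rw [Finset.mem_symmDiff, Finset.mem_symmDiff, Finset.mem_erase, Finset.mem_erase]
  by_cases hj : j = i
  · subst hj; tauto
  · tauto

lemma singleton_of_card_one_mem {s : Finset (Fin n)} {i : Fin n} (h : s.card = 1)
    (hi : i ∈ s) : s = {i} := by
  obtain ⟨d, hd⟩ := Finset.card_eq_one.1 h
  rw [hd] at hi ⊢
  rw [Finset.mem_singleton] at hi
  rw [hi]

/-- the key decomposition of the neighborhood along the coordinate `i`. -/
lemma D2 {X : Finset (Fin n)} {i : Fin n} (hi : i ∈ X) {T : Finset (Finset (Fin n))}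
    (hT : ∀ x ∈ T, x ⊆ X) :
    (NB X T).card = (NB (X.erase i) (sec0 i T) ∪ sec1 i T).card
                  + (NB (X.erase i) (sec1 i T) ∪ sec0 i T).card := by
  classical
  set X' := X.erase i with hX'
  have step1 : (NB X T).filter (fun w => i ∉ w) = NB X' (sec0 i T) ∪ sec1 i T := by
    ext w
    rw [Finset.mem_filter, Finset.mem_union, mem_NB, mem_NB]
    constructor
    · rintro ⟨⟨hwX, x, hxT, hadj⟩, hiw⟩
      by_cases hix : i ∈ x
      · right
        have hsing : symmDiff x w = {i} :=
          singleton_of_card_one_mem hadj (Finset.mem_symmDiff.2 (Or.inl ⟨hix, hiw⟩))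
        have hwx : w = x.erase i := eq_erase_of_symmDiff hsing hix
        rw [sec1, Finset.mem_image]
        exact ⟨x, Finset.mem_filter.2 ⟨hxT, hix⟩, hwx.symm⟩
      · left
        refine ⟨Finset.subset_erase.2 ⟨hwX, hiw⟩, x, ?_, hadj⟩
        rw [sec0, Finset.mem_filter]
        exact ⟨hxT, hix⟩
    · rintro (⟨hwX', x, hx, hadj⟩ | hw1)
      · rw [sec0, Finset.mem_filter] at hx
        have hwX : w ⊆ X := hwX'.trans (Finset.erase_subset i X)
        refine ⟨⟨hwX, x, hx.1, hadj⟩, ?_⟩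
        intro hiw
        exact Finset.notMem_erase i X (hwX' hiw)
      · rw [sec1, Finset.mem_image] at hw1
        obtain ⟨x, hx, rfl⟩ := hw1
        rw [Finset.mem_filter] at hx
        refine ⟨⟨(Finset.erase_subset i x).trans (hT x hx.1), x, hx.1, ?_⟩, Finset.notMem_erase i x⟩
        rw [symmDiff_erase_self hx.2, Finset.card_singleton]
  have step2 : ((NB X T).filter (fun w => i ∈ w)).image (fun w => w.erase i)
      = NB X' (sec1 i T) ∪ sec0 i T := by
    ext v
    rw [Finset.mem_image, Finset.mem_union, mem_NB]
    constructor
    · rintro ⟨w, hw, rfl⟩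
      rw [Finset.mem_filter, mem_NB] at hw
      obtain ⟨⟨hwX, x, hxT, hadj⟩, hiw⟩ := hw
      by_cases hix : i ∈ x
      · left
        refine ⟨Finset.erase_subset_erase i hwX, x.erase i, ?_, ?_⟩
        · rw [sec1, Finset.mem_image]
          exact ⟨x, Finset.mem_filter.2 ⟨hxT, hix⟩, rfl⟩
        · rw [symmDiff_erase_both hix hiw]
          exact hadj
      · right
        have hsing : symmDiff w x = {i} := by
          apply singleton_of_card_one_mem
          · rwa [symmDiff_comm]
          · exact Finset.mem_symmDiff.2 (Or.inl ⟨hiw, hix⟩)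
        have hxv : x = w.erase i := eq_erase_of_symmDiff hsing hiw
        rw [sec0, Finset.mem_filter, ← hxv]
        exact ⟨hxT, hix⟩
    · rintro (⟨hvX', z, hz, hadj⟩ | hv0)
      · rw [sec1, Finset.mem_image] at hz
        obtain ⟨x, hx, rfl⟩ := hz
        rw [Finset.mem_filter] at hx
        have hiv : i ∉ v := fun h => Finset.notMem_erase i X (hvX' h)
        refine ⟨insert i v, ?_, ?_⟩
        · rw [Finset.mem_filter, mem_NB]
          refine ⟨⟨?_, x, hx.1, ?_⟩, Finset.mem_insert_self i v⟩
          · exact Finset.insert_subset hi (hvX'.trans (Finset.erase_subset i X))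
          · have h1 : symmDiff (x.erase i) ((insert i v).erase i) = symmDiff x (insert i v) :=
              symmDiff_erase_both hx.2 (Finset.mem_insert_self i v)
            rw [Finset.erase_insert hiv] at h1
            rw [← h1]
            exact hadj
        · exact Finset.erase_insert hiv
      · rw [sec0, Finset.mem_filter] at hv0
        have hiv : i ∉ v := hv0.2
        refine ⟨insert i v, ?_, Finset.erase_insert hiv⟩
        rw [Finset.mem_filter, mem_NB]
        refine ⟨⟨Finset.insert_subset hi (hT v hv0.1), v, hv0.1, ?_⟩, Finset.mem_insert_self i v⟩
        rw [symmDiff_insert_self hiv, Finset.card_singleton]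
  have hinj : ∀ a ∈ (NB X T).filter (fun w => i ∈ w), ∀ b ∈ (NB X T).filter (fun w => i ∈ w),
      a.erase i = b.erase i → a = b := by
    intro a ha b hb hab
    rw [Finset.mem_filter] at ha hb
    rw [← Finset.insert_erase ha.2, hab, Finset.insert_erase hb.2]
  have hcard2 : ((NB X T).filter (fun w => i ∈ w)).card = (NB X' (sec1 i T) ∪ sec0 i T).card := by
    rw [← step2, Finset.card_image_of_injOn (fun a ha b hb hab => hinj a ha b hb hab)]
  have hsplit : (NB X T).card = ((NB X T).filter (fun w => i ∉ w)).card
      + ((NB X T).filter (fun w => i ∈ w)).card := by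
    rw [add_comm]
    exact (Finset.card_filter_add_card_filter_not (p := fun w => i ∈ w)).symm
  rw [hsplit, step1, hcard2]

/-! ### Part E: preliminaries for the main induction -/

lemma bitw_insert {s : Finset (Fin n)} {j : Fin n} (hj : j ∉ s) :
    bitw (insert j s) = 2^(n-1-(j:ℕ)) + bitw s := by
  rw [bitw, Finset.sum_insert hj]
  rfl

lemma cls_mono {X Y : Finset (Fin n)} {p : ℕ} (h : X ⊆ Y) : cls X p ⊆ cls Y p := by
  intro z hz
  rw [mem_cls] at hz ⊢
  exact ⟨hz.1.trans h, hz.2⟩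

lemma cls_two {X : Finset (Fin n)} {p : ℕ} : cls X (p+2) = cls X p := by
  unfold cls
  apply Finset.filter_congr
  intro z _
  constructor <;> intro h <;> omega

lemma NB_empty {X : Finset (Fin n)} : NB X (∅ : Finset (Finset (Fin n))) = ∅ := by
  ext w
  rw [mem_NB]
  simp

lemma symmDiff_insert_both {s t : Finset (Fin n)} {d : Fin n} (h1 : d ∉ s) (h2 : d ∉ t) :
    symmDiff (insert d s) (insert d t) = symmDiff s t := by
  ext j
  rw [Finset.mem_symmDiff, Finset.mem_symmDiff, Finset.mem_insert, Finset.mem_insert]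
  by_cases hj : j = d
  · subst hj; tauto
  · tauto

lemma symmDiff_sdiff_self {X x : Finset (Fin n)} (h : x ⊆ X) :
    symmDiff x (X \ x) = X := by
  ext j
  rw [Finset.mem_symmDiff, Finset.mem_sdiff]
  constructor
  · rintro (⟨h1, _⟩ | ⟨⟨h1, _⟩, _⟩)
    · exact h h1
    · exact h1
  · intro hj
    by_cases hjx : j ∈ x
    · exact Or.inl ⟨hjx, fun hc => hc.2 hjx⟩
    · exact Or.inr ⟨⟨hj, hjx⟩, hjx⟩

lemma key_insert_strict {z z' : Finset (Fin n)} {i : Fin n} (h1 : i ∉ z) (h2 : i ∉ z')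
    (hk : key z < key z') : key (insert i z) < key (insert i z') := by
  rw [key_lt_iff] at hk ⊢
  rw [Finset.card_insert_of_notMem h1, Finset.card_insert_of_notMem h2,
    bitw_insert h1, bitw_insert h2]
  rcases hk with h | ⟨h, h'⟩
  · exact Or.inl (by omega)
  · exact Or.inr ⟨by omega, by omega⟩

lemma key_erase_strict {x y : Finset (Fin n)} {i : Fin n} (h1 : i ∈ x) (h2 : i ∈ y)
    (hk : key x < key y) : key (x.erase i) < key (y.erase i) := by
  rcases lt_trichotomy (key (x.erase i)) (key (y.erase i)) with h | h | h
  · exact h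
  · exfalso
    have hxy : x = y := by
      have heq := key_injective h
      rw [← Finset.insert_erase h1, ← Finset.insert_erase h2, heq]
    rw [hxy] at hk
    omega
  · exfalso
    have h' := key_insert_strict (Finset.notMem_erase i y) (Finset.notMem_erase i x) h
    rw [Finset.insert_erase h2, Finset.insert_erase h1] at h'
    omega

/-- union of two nested downward-closed families has cardinality the max. -/
lemma union_card_max {Y : Finset (Fin n)} {q : ℕ} {U W : Finset (Finset (Fin n))}
    (hU : U ⊆ cls Y q) (hW : W ⊆ cls Y q)
    (hdcU : ∀ x ∈ U, ∀ y ∈ cls Y q, key y < key x → y ∈ U)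
    (hdcW : ∀ x ∈ W, ∀ y ∈ cls Y q, key y < key x → y ∈ W) :
    (U ∪ W).card = max U.card W.card := by
  rcases dc_subset_total hU hW hdcU hdcW with h | h
  · rw [Finset.union_eq_right.2 h, max_eq_right (Finset.card_le_card h)]
  · rw [Finset.union_eq_left.2 h, max_eq_left (Finset.card_le_card h)]

/-- initial segments minimize key-sums, strictly unless equal. -/
lemma sum_F_iseg_le {Y : Finset (Fin n)} {q : ℕ} {T : Finset (Finset (Fin n))}
    (hT : T ⊆ cls Y q) (F : Finset (Fin n) → ℕ)
    (hF : ∀ a ∈ cls Y q, ∀ b ∈ cls Y q, key a < key b → F a < F b) :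
    (∑ x ∈ iseg Y q T.card, F x) ≤ ∑ x ∈ T, F x ∧
    (T ≠ iseg Y q T.card → (∑ x ∈ iseg Y q T.card, F x) < ∑ x ∈ T, F x) := by
  classical
  obtain ⟨f, hf1, hf2⟩ := exists_match hT
  have hinj : ∀ a ∈ T, ∀ b ∈ T, f a = f b → a = b := by
    have hcardI : (iseg Y q T.card).card = T.card := by
      rw [iseg_card]; exact min_eq_left (Finset.card_le_card hT)
    have hcardim : (T.image f).card = T.card := by rw [hf2, hcardI]
    intro a ha b hb hab
    exact Finset.injOn_of_card_image_eq hcardim ha hb hab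
  have hsum : (∑ x ∈ iseg Y q T.card, F x) = ∑ t ∈ T, F (f t) := by
    rw [← hf2, Finset.sum_image hinj]
  have hFle : ∀ t ∈ T, F (f t) ≤ F t := by
    intro t ht
    obtain ⟨hmem, hkey⟩ := hf1 t ht
    rcases lt_or_eq_of_le hkey with h' | h'
    · exact le_of_lt (hF _ (iseg_subset_cls hmem) _ (hT ht) h')
    · rw [key_injective h']
  constructor
  · rw [hsum]
    exact Finset.sum_le_sum hFle
  · intro hne
    rw [hsum]
    have hex : ∃ t ∈ T, f t ≠ t := by
      by_contra hc
      push_neg at hc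
      apply hne
      rw [← hf2]
      apply Finset.ext
      intro z
      rw [Finset.mem_image]
      constructor
      · intro hz; exact ⟨z, hz, hc z hz⟩
      · rintro ⟨t, ht, rfl⟩; rw [hc t ht]; exact ht
    obtain ⟨t₀, ht₀, hft₀⟩ := hex
    apply Finset.sum_lt_sum hFle
    refine ⟨t₀, ht₀, ?_⟩
    obtain ⟨hmem, hkey⟩ := hf1 t₀ ht₀
    rcases lt_or_eq_of_le hkey with h' | h'
    · exact hF _ (iseg_subset_cls hmem) _ (hT ht₀) h'
    · exact absurd (key_injective h') hft₀

/-- with all coordinates compressed, a "bad pair" must be complementary. -/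
lemma bad_pair_compl {X : Finset (Fin n)} {p : ℕ} {S : Finset (Finset (Fin n))}
    (hS : S ⊆ cls X p)
    (hcomp : ∀ i ∈ X, sec0 i S = iseg (X.erase i) p (sec0 i S).card ∧
      sec1 i S = iseg (X.erase i) (p+1) (sec1 i S).card)
    {x y : Finset (Fin n)} (hx : x ∈ cls X p) (hxS : x ∉ S) (hyS : y ∈ S)
    (hk : key x < key y) : y = X \ x := by
  classical
  have hxX : x ⊆ X := (mem_cls.1 hx).1
  have hyX : y ⊆ X := (mem_cls.1 (hS hyS)).1
  have hall : ∀ i ∈ X, i ∈ symmDiff x y := by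
    intro i hiX
    by_contra hi
    rw [Finset.mem_symmDiff] at hi
    push_neg at hi
    by_cases hix : i ∈ x
    · -- i in both
      have hiy : i ∈ y := hi.1 hix
      have hkey' : key (x.erase i) < key (y.erase i) := key_erase_strict hix hiy hk
      have hyi : y.erase i ∈ sec1 i S := by
        rw [sec1, Finset.mem_image]
        exact ⟨y, Finset.mem_filter.2 ⟨hyS, hiy⟩, rfl⟩
      have hxi : x.erase i ∈ cls (X.erase i) (p+1) := by
        rw [mem_cls]
        refine ⟨Finset.erase_subset_erase i hxX, ?_⟩
        rw [Finset.card_erase_of_mem hix]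
        have h1 : 1 ≤ x.card := Finset.card_pos.2 ⟨i, hix⟩
        have h2 := (mem_cls.1 hx).2
        omega
      have := iseg_dc ((hcomp i hiX).2 ▸ hyi) hxi hkey'
      rw [← (hcomp i hiX).2] at this
      rw [sec1, Finset.mem_image] at this
      obtain ⟨x', hx', hxe⟩ := this
      rw [Finset.mem_filter] at hx'
      have : x' = x := by
        rw [← Finset.insert_erase hx'.2, hxe, Finset.insert_erase hix]
      exact hxS (this ▸ hx'.1)
    · -- i in neither
      have hiy : i ∉ y := fun h => hix (hi.2 h)
      have hyi : y ∈ sec0 i S := Finset.mem_filter.2 ⟨hyS, hiy⟩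
      have hxi : x ∈ cls (X.erase i) p := by
        rw [mem_cls]
        exact ⟨Finset.subset_erase.2 ⟨hxX, hix⟩, (mem_cls.1 hx).2⟩
      have := iseg_dc ((hcomp i hiX).1 ▸ hyi) hxi hk
      rw [← (hcomp i hiX).1] at this
      exact hxS (Finset.mem_filter.1 this).1
  have hsd : symmDiff x y = X := by
    apply Finset.Subset.antisymm
    · intro j hj
      rw [Finset.mem_symmDiff] at hj
      rcases hj with ⟨h1, _⟩ | ⟨h1, _⟩
      · exact hxX h1
      · exact hyX h1
    · exact fun i hi => hall i hi
  ext j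
  rw [Finset.mem_sdiff]
  constructor
  · intro hj
    refine ⟨hyX hj, ?_⟩
    intro hjx
    have : j ∈ symmDiff x y := hsd ▸ hxX hjx
    rw [Finset.mem_symmDiff] at this
    tauto
  · rintro ⟨hjX, hjx⟩
    have : j ∈ symmDiff x y := hsd ▸ hjX
    rw [Finset.mem_symmDiff] at this
    tauto

/-! ### Part F: the compression step -/

lemma compress_step {X : Finset (Fin n)} {i : Fin n} (hiX : i ∈ X)
    (ihN : ∀ (p' : ℕ) (S' : Finset (Finset (Fin n))), S' ⊆ cls (X.erase i) p' →
      (NB (X.erase i) (iseg (X.erase i) p' S'.card)).card ≤ (NB (X.erase i) S').card)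
    {p : ℕ} {S : Finset (Finset (Fin n))} (hS : S ⊆ cls X p)
    (hni : ¬(sec0 i S = iseg (X.erase i) p (sec0 i S).card ∧
            sec1 i S = iseg (X.erase i) (p+1) (sec1 i S).card)) :
    ∃ CS : Finset (Finset (Fin n)), CS ⊆ cls X p ∧ CS.card = S.card ∧
      (∑ x ∈ CS, key x) < (∑ x ∈ S, key x) ∧ (NB X CS).card ≤ (NB X S).card := by
  classical
  set X' := X.erase i with hX'
  set S₀ := sec0 i S with hS₀def
  set S₁ := sec1 i S with hS₁def
  set I₀ := iseg X' p S₀.card with hI₀def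
  set I₁ := iseg X' (p+1) S₁.card with hI₁def
  have hS₀cls : S₀ ⊆ cls X' p := sec0_subset_cls hS
  have hS₁cls : S₁ ⊆ cls X' (p+1) := sec1_subset_cls hS
  have hI₀card : I₀.card = S₀.card := by
    rw [hI₀def, iseg_card]; exact min_eq_left (Finset.card_le_card hS₀cls)
  have hI₁card : I₁.card = S₁.card := by
    rw [hI₁def, iseg_card]; exact min_eq_left (Finset.card_le_card hS₁cls)
  have hX'i : ∀ z : Finset (Fin n), z ⊆ X' → i ∉ z := by
    intro z hz hc
    exact Finset.notMem_erase i X (hz hc)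
  have hI₀i : ∀ z ∈ I₀, i ∉ z := fun z hz => hX'i z (mem_cls.1 (iseg_subset_cls hz)).1
  have hI₁i : ∀ z ∈ I₁, i ∉ z := fun z hz => hX'i z (mem_cls.1 (iseg_subset_cls hz)).1
  set CS := I₀ ∪ I₁.image (fun z => insert i z) with hCSdef
  have hdisj : Disjoint I₀ (I₁.image (fun z => insert i z)) := by
    rw [Finset.disjoint_left]
    intro a haI₀ haIm
    rw [Finset.mem_image] at haIm
    obtain ⟨z, _, rfl⟩ := haIm
    exact hI₀i _ haI₀ (Finset.mem_insert_self i z)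
  have hinj₁ : ∀ a ∈ I₁, ∀ b ∈ I₁, insert i a = insert i b → a = b := by
    intro a ha b hb hab
    rw [← Finset.erase_insert (hI₁i a ha), hab, Finset.erase_insert (hI₁i b hb)]
  have hCScard : CS.card = S.card := by
    rw [hCSdef, Finset.card_union_of_disjoint hdisj,
      Finset.card_image_of_injOn (fun a ha b hb hab => hinj₁ a ha b hb hab),
      hI₀card, hI₁card, hS₀def, hS₁def, sec_card]
  have hCScls : CS ⊆ cls X p := by
    intro z hz
    rw [hCSdef, Finset.mem_union] at hz
    rcases hz with hz | hz
    · exact cls_mono (Finset.erase_subset i X) (iseg_subset_cls hz)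
    · rw [Finset.mem_image] at hz
      obtain ⟨w, hw, rfl⟩ := hz
      have h1 := mem_cls.1 (iseg_subset_cls hw)
      rw [mem_cls]
      constructor
      · exact Finset.insert_subset hiX (h1.1.trans (Finset.erase_subset i X))
      · rw [Finset.card_insert_of_notMem (hI₁i w hw)]
        have := h1.2
        omega
  have hCS0 : sec0 i CS = I₀ := by
    ext z
    rw [sec0, Finset.mem_filter, hCSdef, Finset.mem_union]
    constructor
    · rintro ⟨hz | hz, hiz⟩
      · exact hz
      · exfalso
        rw [Finset.mem_image] at hz
        obtain ⟨w, _, rfl⟩ := hz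
        exact hiz (Finset.mem_insert_self i w)
    · intro hz
      exact ⟨Or.inl hz, hI₀i z hz⟩
  have hCS1 : sec1 i CS = I₁ := by
    ext z
    rw [sec1, Finset.mem_image]
    constructor
    · rintro ⟨x, hx, rfl⟩
      rw [Finset.mem_filter] at hx
      obtain ⟨hxCS, hix⟩ := hx
      rw [hCSdef, Finset.mem_union] at hxCS
      rcases hxCS with hx | hx
      · exact absurd hix (hI₀i x hx)
      · rw [Finset.mem_image] at hx
        obtain ⟨w, hw, rfl⟩ := hx
        rw [Finset.erase_insert (hI₁i w hw)]
        exact hw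
    · intro hz
      refine ⟨insert i z, ?_, Finset.erase_insert (hI₁i z hz)⟩
      rw [Finset.mem_filter]
      constructor
      · rw [hCSdef, Finset.mem_union]
        exact Or.inr (Finset.mem_image_of_mem _ hz)
      · exact Finset.mem_insert_self i z
  -- sums
  have hS₁i : ∀ z ∈ S₁, i ∉ z := fun z hz => hX'i z (mem_cls.1 (hS₁cls hz)).1
  have hsumS : (∑ x ∈ S, key x) = (∑ x ∈ S₀, key x) + (∑ z ∈ S₁, key (insert i z)) := by
    have hsplit : (∑ x ∈ S, key x) =
        (∑ x ∈ S.filter (fun x => i ∈ x), key x) + ∑ x ∈ S.filter (fun x => i ∉ x), key x :=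
      (Finset.sum_filter_add_sum_filter_not S (fun x => i ∈ x) key).symm
    have himg : (∑ z ∈ S₁, key (insert i z)) = ∑ x ∈ S.filter (fun x => i ∈ x), key x := by
      rw [hS₁def, sec1, Finset.sum_image (fun a ha b hb hab => erase_injOn_filter a ha b hb hab)]
      apply Finset.sum_congr rfl
      intro x hx
      rw [Finset.mem_filter] at hx
      rw [Finset.insert_erase hx.2]
    rw [hsplit, ← himg, hS₀def, sec0]
    omega
  have hsumCS : (∑ x ∈ CS, key x) = (∑ x ∈ I₀, key x) + (∑ z ∈ I₁, key (insert i z)) := by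
    rw [hCSdef, Finset.sum_union hdisj,
      Finset.sum_image (fun a ha b hb hab => hinj₁ a ha b hb hab)]
  have h0 := sum_F_iseg_le hS₀cls key (fun a _ b _ h => h)
  have h1 := sum_F_iseg_le hS₁cls (fun z => key (insert i z))
    (fun a ha b hb h => key_insert_strict (hX'i a (mem_cls.1 ha).1) (hX'i b (mem_cls.1 hb).1) h)
  have hsumlt : (∑ x ∈ CS, key x) < ∑ x ∈ S, key x := by
    rw [hsumS, hsumCS]
    rcases not_and_or.1 hni with hd | hd
    · have hst : (∑ x ∈ I₀, key x) < ∑ x ∈ S₀, key x :=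
        h0.2 (by rw [← hS₀def, ← hI₀def] at *; exact fun h => hd h)
      have hle : (∑ z ∈ I₁, key (insert i z)) ≤ ∑ z ∈ S₁, key (insert i z) := h1.1
      omega
    · have hst : (∑ z ∈ I₁, key (insert i z)) < ∑ z ∈ S₁, key (insert i z) :=
        h1.2 (by rw [← hS₁def, ← hI₁def] at *; exact fun h => hd h)
      have hle : (∑ x ∈ I₀, key x) ≤ ∑ x ∈ S₀, key x := h0.1
      omega
  -- neighborhood comparison
  have hD2S := D2 hiX (T := S) (fun x hx => (mem_cls.1 (hS hx)).1)
  have hD2CS := D2 hiX (T := CS) (fun x hx => (mem_cls.1 (hCScls hx)).1)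
  rw [← hX', ← hS₀def, ← hS₁def] at hD2S
  rw [← hX', hCS0, hCS1] at hD2CS
  have hNB0 : (NB X' I₀ ∪ I₁).card ≤ (NB X' S₀ ∪ S₁).card := by
    have hunion : (NB X' I₀ ∪ I₁).card = max (NB X' I₀).card I₁.card := by
      apply union_card_max (q := p+1)
      · exact NB_subset_cls iseg_subset_cls
      · exact iseg_subset_cls
      · exact fun w hw w' hw' hk => NB_iseg_dc hw hw' hk
      · exact fun w hw w' hw' hk => iseg_dc hw hw' hk
    rw [hunion]
    apply max_le
    · exact le_trans (ihN p S₀ hS₀cls) (Finset.card_le_card Finset.subset_union_left)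
    · rw [hI₁card]
      exact Finset.card_le_card Finset.subset_union_right
  have hNB1 : (NB X' I₁ ∪ I₀).card ≤ (NB X' S₁ ∪ S₀).card := by
    have hcls2 : NB X' I₁ ⊆ cls X' p := by
      have h := NB_subset_cls (iseg_subset_cls (m := S₁.card) (p := p+1) (X := X'))
      rw [show p+1+1 = p+2 from rfl, cls_two] at h
      exact h
    have hunion : (NB X' I₁ ∪ I₀).card = max (NB X' I₁).card I₀.card := by
      apply union_card_max (q := p)
      · exact hcls2
      · exact iseg_subset_cls
      · intro w hw w' hw' hk
        apply NB_iseg_dc hw _ hk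
        rw [show p+1+1 = p+2 from rfl, cls_two]
        exact hw'
      · exact fun w hw w' hw' hk => iseg_dc hw hw' hk
    rw [hunion]
    apply max_le
    · exact le_trans (ihN (p+1) S₁ hS₁cls) (Finset.card_le_card Finset.subset_union_left)
    · rw [hI₀card]
      exact Finset.card_le_card Finset.subset_union_right
  refine ⟨CS, hCScls, hCScard, hsumlt, ?_⟩
  rw [hD2S, hD2CS]
  exact Nat.add_le_add hNB0 hNB1

/-! ### Part G: the exceptional (fully compressed) case -/

lemma bitw_singleton (a : Fin n) : bitw ({a} : Finset (Fin n)) = 2^(n-1-(a:ℕ)) := by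
  simp [bitw]

lemma exceptional_step {X : Finset (Fin n)} {p : ℕ} {S : Finset (Finset (Fin n))}
    (hS : S ⊆ cls X p)
    (hcomp : ∀ i ∈ X, sec0 i S = iseg (X.erase i) p (sec0 i S).card ∧
      sec1 i S = iseg (X.erase i) (p+1) (sec1 i S).card)
    {x₀ y₀ : Finset (Fin n)} (hx₀cls : x₀ ∈ cls X p) (hx₀S : x₀ ∉ S)
    (hy₀S : y₀ ∈ S) (hk₀ : key x₀ < key y₀) :
    (NB X (iseg X p S.card)).card ≤ (NB X S).card := by
  classical
  have hy₀ : y₀ = X \ x₀ := bad_pair_compl hS hcomp hx₀cls hx₀S hy₀S hk₀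
  have hx₀X : x₀ ⊆ X := (mem_cls.1 hx₀cls).1
  have hy₀X : y₀ ⊆ X := by rw [hy₀]; exact Finset.sdiff_subset
  have hcompl_inj : ∀ z : Finset (Fin n), z ⊆ X → X \ z = X \ x₀ → z = x₀ := by
    intro z hzX h
    have h1 : X \ (X \ z) = X \ (X \ x₀) := by rw [h]
    rwa [Finset.sdiff_sdiff_self_left, Finset.sdiff_sdiff_self_left,
      Finset.inter_eq_right.2 hzX, Finset.inter_eq_right.2 hx₀X] at h1
  set J := (cls X p).filter (fun z => key z < key x₀) with hJdef
  have hSJ : S = insert y₀ J := by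
    ext z
    rw [Finset.mem_insert]
    constructor
    · intro hz
      rcases lt_trichotomy (key z) (key x₀) with h | h | h
      · exact Or.inr (Finset.mem_filter.2 ⟨hS hz, h⟩)
      · exact absurd (key_injective h ▸ hz) hx₀S
      · left
        have := bad_pair_compl hS hcomp hx₀cls hx₀S hz h
        rw [this, ← hy₀]
    · rintro (rfl | hz)
      · exact hy₀S
      · rw [Finset.mem_filter] at hz
        by_contra hzS
        have hc := bad_pair_compl hS hcomp hz.1 hzS hy₀S (lt_trans hz.2 hk₀)
        have : z = x₀ := hcompl_inj z (mem_cls.1 hz.1).1 (hc.symm.trans hy₀)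
        rw [this] at hz
        omega
  have hbtw : ∀ z ∈ cls X p, key x₀ < key z → key z < key y₀ → False := by
    intro z hzcls h1 h2
    by_cases hzS : z ∈ S
    · rw [hSJ, Finset.mem_insert] at hzS
      rcases hzS with rfl | hzJ
      · omega
      · rw [Finset.mem_filter] at hzJ
        omega
    · have hc := bad_pair_compl hS hcomp hzcls hzS hy₀S h2
      have : z = x₀ := hcompl_inj z (mem_cls.1 hzcls).1 (hc.symm.trans hy₀)
      rw [this] at h1
      omega
  have hy₀J : y₀ ∉ J := by
    intro h
    rw [hJdef, Finset.mem_filter] at h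
    omega
  have hx₀J : x₀ ∉ J := by
    intro h
    rw [hJdef, Finset.mem_filter] at h
    omega
  have hScard : S.card = J.card + 1 := by
    rw [hSJ, Finset.card_insert_of_notMem hy₀J]
  have hIeq : iseg X p S.card = insert x₀ J := by
    have hIJcls : insert x₀ J ⊆ cls X p := by
      intro z hz
      rcases Finset.mem_insert.1 hz with rfl | hz
      · exact hx₀cls
      · exact Finset.filter_subset _ _ hz
    have hI := initial_eq_iseg hIJcls ?_
    · have hIcard : (insert x₀ J).card = S.card := by
        rw [Finset.card_insert_of_notMem hx₀J, hScard]
      rw [← hIcard, ← hI]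
    · intro z hz y hycls hk
      rcases Finset.mem_insert.1 hz with rfl | hz
      · exact Finset.mem_insert_of_mem (Finset.mem_filter.2 ⟨hycls, hk⟩)
      · rw [Finset.mem_filter] at hz
        exact Finset.mem_insert_of_mem (Finset.mem_filter.2 ⟨hycls, lt_trans hk hz.2⟩)
  rw [hIeq, hSJ, Finset.insert_eq x₀ J, Finset.insert_eq y₀ J, NB_union, NB_union]
  by_cases hJ : J = ∅
  · rw [hJ, NB_empty, Finset.union_empty, Finset.union_empty,
      NB_singleton_card hx₀X, NB_singleton_card hy₀X]
  -- coverage case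
  have hJne : J.Nonempty := Finset.nonempty_iff_ne_empty.2 hJ
  have hpar₀ := (mem_cls.1 hx₀cls).2
  have hx₀ne : x₀.Nonempty := by
    rw [Finset.nonempty_iff_ne_empty]
    intro hx₀e
    obtain ⟨z, hz⟩ := hJne
    rw [hJdef, Finset.mem_filter] at hz
    obtain ⟨hzcls, hzk⟩ := hz
    rw [hx₀e] at hzk
    rcases key_lt_iff.1 hzk with hc | ⟨hc, hb⟩
    · simp at hc
    · have : z = ∅ := Finset.card_eq_zero.1 (by simpa using hc)
      rw [this] at hb
      omega
  have hXne : X.Nonempty := by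
    obtain ⟨a, ha⟩ := hx₀ne
    exact ⟨a, hx₀X ha⟩
  set o := X.min' hXne with ho
  set M := x₀.max' hx₀ne with hM
  have hMmem : M ∈ x₀ := x₀.max'_mem hx₀ne
  have hr := key_card_le hk₀
  have hy₀card : y₀.card = X.card - x₀.card := by rw [hy₀, Finset.card_sdiff_of_subset hx₀X]
  have hsingJ : x₀.card = 1 → o ∈ x₀ → False := by
    intro hc1 hox
    have hx₀o : x₀ = {o} := singleton_of_card_one_mem hc1 hox
    obtain ⟨z, hz⟩ := hJne
    rw [hJdef, Finset.mem_filter] at hz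
    obtain ⟨hzcls, hzk⟩ := hz
    rcases key_lt_iff.1 hzk with hc | ⟨hc, hb⟩
    · have h1 := (mem_cls.1 hzcls).2
      omega
    · obtain ⟨e, he⟩ := Finset.card_eq_one.1 (by omega : z.card = 1)
      rw [hx₀o, he, bitw_singleton, bitw_singleton] at hb
      have heo : (e:ℕ) < (o:ℕ) := by
        by_contra hcon
        push_neg at hcon
        have : 2^(n-1-(e:ℕ)) ≤ 2^(n-1-(o:ℕ)) :=
          Nat.pow_le_pow_right (by norm_num) (by omega)
        omega
      have heX : e ∈ X := (mem_cls.1 hzcls).1 (he ▸ Finset.mem_singleton_self e)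
      have h2 : o ≤ e := X.min'_le e heX
      have h3 : (o:ℕ) ≤ (e:ℕ) := h2
      omega
  have hmaxf : ∀ b ∈ X, b ∉ x₀ → b < M := by
    intro b hbX hbx
    by_contra hcon
    push_neg at hcon
    have hMb : M < b := lt_of_le_of_ne hcon (fun h => hbx (h ▸ hMmem))
    set z := insert b (x₀.erase M) with hzdef
    have hbz : b ∉ x₀.erase M := fun h => hbx (Finset.mem_of_mem_erase h)
    have hzcard : z.card = x₀.card := by
      rw [hzdef, Finset.card_insert_of_notMem hbz, Finset.card_erase_of_mem hMmem]
      have : 1 ≤ x₀.card := Finset.card_pos.2 hx₀ne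
      omega
    have hzX : z ⊆ X := Finset.insert_subset hbX ((Finset.erase_subset M x₀).trans hx₀X)
    have hzcls : z ∈ cls X p := mem_cls.2 ⟨hzX, by rw [hzcard]; exact hpar₀⟩
    have hbitw : bitw z < bitw x₀ := by
      rw [hzdef, bitw_insert hbz]
      conv_rhs => rw [← Finset.insert_erase hMmem]
      rw [bitw_insert (Finset.notMem_erase M x₀)]
      have hpow : 2^(n-1-(b:ℕ)) < 2^(n-1-(M:ℕ)) := by
        apply Nat.pow_lt_pow_right (by norm_num)
        have h1 : (M:ℕ) < (b:ℕ) := hMb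
        have := b.isLt
        omega
      omega
    have h1 : key x₀ < key z := key_lt_iff.2 (Or.inr ⟨hzcard.symm, hbitw⟩)
    have h2 : key z < key y₀ := by
      rcases lt_or_eq_of_le hr with hlt | heq
      · exact key_lt_of_card_lt (by omega)
      · have hbo : bitw y₀ < bitw x₀ := by
          rcases key_lt_iff.1 hk₀ with hc | ⟨_, hb⟩
          · omega
          · exact hb
        have hsdX : symmDiff x₀ y₀ = X := by rw [hy₀]; exact symmDiff_sdiff_self hx₀X
        have hox : o ∈ x₀ := by
          by_contra hox
          have hoy : o ∈ y₀ := by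
            have h' : o ∈ symmDiff x₀ y₀ := hsdX ▸ X.min'_mem hXne
            rw [Finset.mem_symmDiff] at h'
            tauto
          have : bitw x₀ < bitw y₀ := by
            apply bitw_lt_of_min hoy hox
            intro j hj _
            have h1' : o ≤ j := X.min'_le j (hx₀X hj)
            exact lt_of_le_of_ne h1' (fun h => hox (h ▸ hj))
          omega
        have hr2 : 2 ≤ x₀.card := by
          rcases lt_or_eq_of_le (show 1 ≤ x₀.card from Finset.card_pos.2 hx₀ne) with h' | h'
          · omega
          · exact absurd hox (fun hc => hsingJ h'.symm hc)
        have hoM : o ≠ M := by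
          intro h
          have hsub : x₀ ⊆ {o} := by
            intro j hj
            have h1' : o ≤ j := X.min'_le j (hx₀X hj)
            have h2' : j ≤ M := x₀.le_max' j hj
            rw [← h] at h2'
            rw [Finset.mem_singleton]
            exact le_antisymm h2' h1'
          have := Finset.card_le_card hsub
          simp at this
          omega
        have hoz : o ∈ z := by
          rw [hzdef]
          exact Finset.mem_insert_of_mem (Finset.mem_erase.2 ⟨hoM, hox⟩)
        have hoy : o ∉ y₀ := by
          rw [hy₀]
          exact fun h => (Finset.mem_sdiff.1 h).2 hox
        have hby : bitw y₀ < bitw z := by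
          apply bitw_lt_of_min hoz hoy
          intro j hj _
          have h1' : o ≤ j := X.min'_le j (hy₀X hj)
          exact lt_of_le_of_ne h1' (fun h => hoy (h ▸ hj))
        exact key_lt_iff.2 (Or.inr ⟨by omega, hby⟩)
    exact hbtw z hzcls h1 h2
  suffices hcov : NB X {x₀} ⊆ NB X J by
    calc (NB X {x₀} ∪ NB X J).card = (NB X J).card := by rw [Finset.union_eq_right.2 hcov]
      _ ≤ (NB X {y₀} ∪ NB X J).card := Finset.card_le_card Finset.subset_union_right
  intro w hw
  rw [mem_NB] at hw
  obtain ⟨hwX, x, hx, hadj⟩ := hw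
  rw [Finset.mem_singleton] at hx
  rw [hx] at hadj
  rcases adj_iff.1 hadj with ⟨d, hd, rfl⟩ | ⟨d, hd, rfl⟩
  · -- w = x₀.erase d
    rcases lt_or_eq_of_le (show 1 ≤ x₀.card from Finset.card_pos.2 hx₀ne) with hr2 | hr1
    · have hne' : (x₀.erase d).Nonempty := Finset.card_pos.1 (by
        rw [Finset.card_erase_of_mem hd]; omega)
      obtain ⟨e, he⟩ := hne'
      set z := (x₀.erase d).erase e with hzdef
      have hzcls : z ∈ cls X p := by
        rw [mem_cls]
        constructor
        · exact (Finset.erase_subset _ _).trans ((Finset.erase_subset _ _).trans hx₀X)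
        · rw [hzdef, Finset.card_erase_of_mem he, Finset.card_erase_of_mem hd]
          omega
      have hzJ : z ∈ J := by
        rw [hJdef, Finset.mem_filter]
        refine ⟨hzcls, key_lt_of_card_lt ?_⟩
        rw [hzdef, Finset.card_erase_of_mem he, Finset.card_erase_of_mem hd]
        omega
      rw [mem_NB]
      refine ⟨hwX, z, hzJ, ?_⟩
      rw [hzdef, symmDiff_comm, symmDiff_erase_self he, Finset.card_singleton]
    · -- x₀.card = 1
      have hwemp : x₀.erase d = ∅ := Finset.card_eq_zero.1 (by
        rw [Finset.card_erase_of_mem hd]; omega)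
      have hox : o ∉ x₀ := fun h => hsingJ hr1.symm h
      have hx₀d : x₀ = {d} := singleton_of_card_one_mem hr1.symm hd
      have hdX : d ∈ X := hx₀X hd
      have hod : o < d := by
        refine lt_of_le_of_ne (X.min'_le d hdX) (fun h => hox ?_)
        rw [hx₀d, h]
        exact Finset.mem_singleton_self d
      have hzcls : ({o} : Finset (Fin n)) ∈ cls X p := by
        rw [mem_cls]
        refine ⟨Finset.singleton_subset_iff.2 (X.min'_mem hXne), ?_⟩
        rw [Finset.card_singleton]
        omega
      have hkey : key ({o} : Finset (Fin n)) < key x₀ := by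
        apply key_lt_iff.2
        right
        constructor
        · rw [Finset.card_singleton]; omega
        · rw [hx₀d, bitw_singleton, bitw_singleton]
          apply Nat.pow_lt_pow_right (by norm_num)
          have h1 : (o:ℕ) < (d:ℕ) := hod
          have := d.isLt
          omega
      rw [mem_NB]
      refine ⟨hwX, {o}, Finset.mem_filter.2 ⟨hzcls, hkey⟩, ?_⟩
      rw [hwemp]
      have h1 : symmDiff ({o} : Finset (Fin n)) ∅ = {o} := by
        rw [show (∅ : Finset (Fin n)) = (⊥ : Finset (Fin n)) from rfl, symmDiff_bot]
      rw [h1, Finset.card_singleton]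
  · -- w = insert d x₀
    have hdX : d ∈ X := hwX (Finset.mem_insert_self d x₀)
    have hdM : d < M := hmaxf d hdX hd
    set z := insert d (x₀.erase M) with hzdef
    have hbz : d ∉ x₀.erase M := fun h => hd (Finset.mem_of_mem_erase h)
    have hzcard : z.card = x₀.card := by
      rw [hzdef, Finset.card_insert_of_notMem hbz, Finset.card_erase_of_mem hMmem]
      have : 1 ≤ x₀.card := Finset.card_pos.2 hx₀ne
      omega
    have hzX : z ⊆ X := Finset.insert_subset hdX ((Finset.erase_subset M x₀).trans hx₀X)
    have hzcls : z ∈ cls X p := mem_cls.2 ⟨hzX, by rw [hzcard]; exact hpar₀⟩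
    have hbitw : bitw x₀ < bitw z := by
      rw [hzdef, bitw_insert hbz]
      conv_lhs => rw [← Finset.insert_erase hMmem]
      rw [bitw_insert (Finset.notMem_erase M x₀)]
      have hpow : 2^(n-1-(M:ℕ)) < 2^(n-1-(d:ℕ)) := by
        apply Nat.pow_lt_pow_right (by norm_num)
        have h1 : (d:ℕ) < (M:ℕ) := hdM
        have := M.isLt
        omega
      omega
    have hzJ : z ∈ J := by
      rw [hJdef, Finset.mem_filter]
      exact ⟨hzcls, key_lt_iff.2 (Or.inr ⟨hzcard, hbitw⟩)⟩
    rw [mem_NB]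
    refine ⟨hwX, z, hzJ, ?_⟩
    have h1 : symmDiff z (insert d x₀) = symmDiff (x₀.erase M) x₀ := by
      rw [hzdef]
      exact symmDiff_insert_both hbz hd
    rw [h1, symmDiff_comm, symmDiff_erase_self hMmem, Finset.card_singleton]

/-! ### Part H: the main theorem -/

theorem main : ∀ (N : ℕ) (X : Finset (Fin n)), X.card ≤ N →
    ∀ (p : ℕ) (S : Finset (Finset (Fin n))), S ⊆ cls X p →
    (NB X (iseg X p S.card)).card ≤ (NB X S).card := by
  intro N
  induction N with
  | zero =>
    intro X hX p S hS
    have hXe : X = ∅ := Finset.card_eq_zero.1 (by omega)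
    subst hXe
    have hNBe : NB (∅ : Finset (Fin n)) (iseg ∅ p S.card) = ∅ := by
      rw [Finset.eq_empty_iff_forall_notMem]
      intro w hw
      rw [mem_NB] at hw
      obtain ⟨hw1, x, hx, hadj⟩ := hw
      have hxe : x = ∅ := Finset.subset_empty.1 (mem_cls.1 (iseg_subset_cls hx)).1
      have hwe : w = ∅ := Finset.subset_empty.1 hw1
      rw [hxe, hwe] at hadj
      simp [symmDiff_self] at hadj
    rw [hNBe]
    simp
  | succ N ihN =>
    intro X hX p S hS
    generalize hμ : (∑ x ∈ S, key x) = μ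
    induction μ using Nat.strong_induction_on generalizing S with
    | _ μ ihμ =>
    by_cases hinit : S = iseg X p S.card
    · rw [← hinit]
    by_cases hcomp : ∃ i ∈ X, ¬(sec0 i S = iseg (X.erase i) p (sec0 i S).card ∧
        sec1 i S = iseg (X.erase i) (p+1) (sec1 i S).card)
    · obtain ⟨i, hiX, hni⟩ := hcomp
      have hXecard : (X.erase i).card ≤ N := by
        rw [Finset.card_erase_of_mem hiX]
        have : 1 ≤ X.card := Finset.card_pos.2 ⟨i, hiX⟩
        omega
      obtain ⟨CS, h1, h2, h3, h4⟩ :=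
        compress_step hiX (fun p' S' hS' => ihN (X.erase i) hXecard p' S' hS') hS hni
      calc (NB X (iseg X p S.card)).card
          = (NB X (iseg X p CS.card)).card := by rw [h2]
        _ ≤ (NB X CS).card := ihμ (∑ x ∈ CS, key x) (hμ ▸ h3) CS h1 rfl
        _ ≤ (NB X S).card := h4
    · push_neg at hcomp
      have hbad : ∃ x y, x ∈ cls X p ∧ x ∉ S ∧ y ∈ S ∧ key x < key y := by
        by_contra hno
        push_neg at hno
        apply hinit
        apply initial_eq_iseg hS
        intro x hxS y hycls hk
        by_contra hyS
        exact absurd hk (not_lt.2 (hno y x hycls hyS hxS))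
      obtain ⟨x₀, y₀, hx₀cls, hx₀S, hy₀S, hk₀⟩ := hbad
      exact exceptional_step hS (fun i hi => ⟨(hcomp i hi).1, (hcomp i hi).2⟩)
        hx₀cls hx₀S hy₀S hk₀

end Harper

/-- Harper-type theorem: initial segments of weightlex-even minimize the neighborhood
among even-weight sets of the same size. -/
theorem initSeg_min_nbhd (n k : ℕ) (A C : Finset (Finset (Fin n)))
    (hA : ∀ x ∈ A, Even x.card) (hAcard : A.card = k)
    (hC : IsInitSeg (fun x => Even x.card) C) (hCcard : C.card = k) :
    (nbhd (Q n) C).card ≤ (nbhd (Q n) A).card := by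
  classical
  have hnb : ∀ S : Finset (Finset (Fin n)), nbhd (Q n) S = Harper.NB Finset.univ S := by
    intro S
    ext w
    rw [nbhd, Finset.mem_filter, Harper.mem_NB]
    constructor
    · rintro ⟨_, x, hx, hadj⟩
      exact ⟨Finset.subset_univ w, x, hx, hadj⟩
    · rintro ⟨_, x, hx, hadj⟩
      exact ⟨Finset.mem_univ w, x, hx, hadj⟩
  have hAc : A ⊆ Harper.cls Finset.univ 0 := by
    intro x hx
    rw [Harper.mem_cls]
    refine ⟨Finset.subset_univ x, ?_⟩
    have := hA x hx
    rw [Nat.even_iff] at this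
    omega
  have hCc : C ⊆ Harper.cls Finset.univ 0 := by
    intro x hx
    rw [Harper.mem_cls]
    refine ⟨Finset.subset_univ x, ?_⟩
    have h2 : Even x.card := hC.1 x hx
    rw [Nat.even_iff] at h2
    omega
  have hCdc : ∀ x ∈ C, ∀ y ∈ Harper.cls Finset.univ 0, Harper.key y < Harper.key x → y ∈ C := by
    intro x hx y hy hk
    apply hC.2 y x hx
    · show Even y.card
      have := (Harper.mem_cls.1 hy).2
      rw [Nat.even_iff]
      omega
    · exact Harper.wlexLt_iff_key.2 hk
  have hCi : C = Harper.iseg Finset.univ 0 C.card := Harper.initial_eq_iseg hCc hCdc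
  have hmain := Harper.main (n := n) n Finset.univ (by simp) 0 A hAc
  rw [hAcard] at hmain
  have hCeq : Harper.NB Finset.univ C = Harper.NB Finset.univ (Harper.iseg Finset.univ 0 k) := by
    conv_lhs => rw [hCi]
    rw [hCcard]
  rw [hnb A, hnb C, hCeq]
  exact hmain
end

section
/- If B ⊆ Q^n_even is compressed (i.e., (i,j)-compressed for all pairs i,j) but not an initial segment of weightlex-even, then for any x ∉ B and y ∈ B with x ≺ y (in weightlex-even order), exactly one of the following holds: (1) |x ∩ y| = 1 and x ∪ y = [n]; (2) |x ∩ y| = 0 and x ∪ y = [n] \ {k} for some k; (3) x = y^c. -/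
open Finset
open scoped Classical

variable {V : Type*} [Fintype V]

/-- The `(bi,bj)`-part of a family `A` with respect to coordinates `i, j`: the members
of `A` whose membership pattern on `{i,j}` is `(bi,bj)`, with `i` and `j` removed. -/
noncomputable def part {n : ℕ} (i j : Fin n) (bi bj : Bool)
    (A : Finset (Finset (Fin n))) : Finset (Finset (Fin n)) :=
  (A.filter fun x => (i ∈ x ↔ bi = true) ∧ (j ∈ x ↔ bj = true)).image fun x => x \ {i, j}

/-- The class of sets in which the `(bi,bj)`-part of an `(i,j)`-compressed even family
must form a weightlex initial segment: sets avoiding `i, j` of the appropriate parity. -/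
def partPred {n : ℕ} (i j : Fin n) (bi bj : Bool) (x : Finset (Fin n)) : Prop :=
  i ∉ x ∧ j ∉ x ∧ Even (x.card + (cond bi 1 0) + (cond bj 1 0))

/-- `A` is `(i,j)`-compressed for all pairs `i ≠ j`: each part is already an initial
segment of the appropriate weightlex order. -/
def Compressed {n : ℕ} (A : Finset (Finset (Fin n))) : Prop :=
  ∀ i j : Fin n, i ≠ j → ∀ bi bj : Bool, IsInitSeg (partPred i j bi bj) (part i j bi bj A)

lemma cardSplit {n : ℕ} (s : Finset (Fin n)) (i j : Fin n) (hij : i ≠ j)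
    (bi bj : Bool) (hi : i ∈ s ↔ bi = true) (hj : j ∈ s ↔ bj = true) :
    s.card = (s \ {i, j}).card + cond bi 1 0 + cond bj 1 0 := by
  classical
  have h : (s \ {i, j}).card + (s ∩ {i, j}).card = s.card :=
    Finset.card_sdiff_add_card_inter s {i, j}
  have hinter : (s ∩ ({i, j} : Finset (Fin n))).card = cond bi 1 0 + cond bj 1 0 := by
    cases bi <;> cases bj <;> simp only [Bool.false_eq_true, iff_false, iff_true] at hi hj
    · have : s ∩ ({i, j} : Finset (Fin n)) = ∅ := by
        ext a
        simp only [Finset.mem_inter, Finset.mem_insert, Finset.mem_singleton,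
          Finset.notMem_empty, iff_false]
        rintro ⟨ha, rfl | rfl⟩ <;> tauto
      simp [this]
    · have : s ∩ ({i, j} : Finset (Fin n)) = {j} := by
        ext a
        simp only [Finset.mem_inter, Finset.mem_insert, Finset.mem_singleton]
        constructor
        · rintro ⟨ha, rfl | rfl⟩ <;> tauto
        · rintro rfl; tauto
      simp [this]
    · have : s ∩ ({i, j} : Finset (Fin n)) = {i} := by
        ext a
        simp only [Finset.mem_inter, Finset.mem_insert, Finset.mem_singleton]
        constructor
        · rintro ⟨ha, rfl | rfl⟩ <;> tauto
        · rintro rfl; tauto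
      simp [this]
    · have : s ∩ ({i, j} : Finset (Fin n)) = {i, j} := by
        apply Finset.inter_eq_right.mpr
        intro a ha
        simp only [Finset.mem_insert, Finset.mem_singleton] at ha
        rcases ha with rfl | rfl <;> assumption
      rw [this, Finset.card_insert_of_notMem (by simpa using hij), Finset.card_singleton]
      rfl
  omega

set_option maxHeartbeats 1000000 in
lemma key_contradiction {n : ℕ} (B : Finset (Finset (Fin n))) (hcomp : Compressed B)
    (x y : Finset (Fin n)) (hx : x ∉ B) (hxeven : Even x.card)
    (hy : y ∈ B) (hxy : wlexLt x y) (i j : Fin n) (hij : i ≠ j) (bi bj : Bool)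
    (hxi : i ∈ x ↔ bi = true) (hxj : j ∈ x ↔ bj = true)
    (hyi : i ∈ y ↔ bi = true) (hyj : j ∈ y ↔ bj = true) : False := by
  classical
  -- y' is in the part
  have hyfilt : y ∈ B.filter fun z => (i ∈ z ↔ bi = true) ∧ (j ∈ z ↔ bj = true) :=
    Finset.mem_filter.mpr ⟨hy, hyi, hyj⟩
  have hy' : y \ {i, j} ∈ part i j bi bj B := Finset.mem_image_of_mem _ hyfilt
  -- symmetric differences agree
  have hsd : symmDiff (x \ {i, j}) (y \ {i, j}) = symmDiff x y := by
    ext a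
    have hagree : a = i ∨ a = j → (a ∈ x ↔ a ∈ y) := by
      rintro (rfl | rfl)
      · rw [hxi, hyi]
      · rw [hxj, hyj]
    simp only [Finset.mem_symmDiff, Finset.mem_sdiff, Finset.mem_insert,
      Finset.mem_singleton]
    by_cases hij' : a = i ∨ a = j
    · have := hagree hij'; tauto
    · tauto
  -- cards
  have hcx : x.card = (x \ {i, j}).card + cond bi 1 0 + cond bj 1 0 :=
    cardSplit x i j hij bi bj hxi hxj
  have hcy : y.card = (y \ {i, j}).card + cond bi 1 0 + cond bj 1 0 :=
    cardSplit y i j hij bi bj hyi hyj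
  -- partPred for x'
  have hpred : partPred i j bi bj (x \ {i, j}) := by
    refine ⟨by simp, by simp, ?_⟩
    rw [← hcx]; exact hxeven
  -- wlexLt for restricted sets
  have hlt : wlexLt (x \ {i, j}) (y \ {i, j}) := by
    rcases hxy with hlt | ⟨hcard, a, hax, hay, hmin⟩
    · left; omega
    · right
      have hai : a ≠ i := by rintro rfl; exact hay (hyi.mpr (hxi.mp hax))
      have haj : a ≠ j := by rintro rfl; exact hay (hyj.mpr (hxj.mp hax))
      refine ⟨by omega, a, ?_, fun h => hay (Finset.mem_sdiff.mp h).1,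
        fun b hb => hmin b (by rwa [← hsd])⟩
      simp [Finset.mem_sdiff, hax, hai, haj]
  have hx' : x \ {i, j} ∈ part i j bi bj B :=
    (hcomp i j hij bi bj).2 _ _ hy' hpred hlt
  -- extract the witness and show it equals x
  rw [part, Finset.mem_image] at hx'
  obtain ⟨z, hzfilt, hz⟩ := hx'
  rw [Finset.mem_filter] at hzfilt
  obtain ⟨hzB, hzi, hzj⟩ := hzfilt
  have : z = x := by
    ext a
    by_cases hai : a = i
    · subst hai; rw [hzi, hxi]
    · by_cases haj : a = j
      · subst haj; rw [hzj, hxj]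
      · have := Finset.ext_iff.mp hz a
        simp only [Finset.mem_sdiff, Finset.mem_insert, Finset.mem_singleton] at this
        have hnot : ¬(a = i ∨ a = j) := fun hc => hc.elim hai haj
        constructor
        · intro h; exact ((this.mp ⟨h, hnot⟩)).1
        · intro h; exact ((this.mpr ⟨h, hnot⟩)).1
  rw [this] at hzB
  exact hx hzB

/-- If $B ⊆ Q^n_{even}$ is compressed but not an initial segment of weightlex-even,
then any $x ∉ B$, $y ∈ B$ with $x ≺ y$ satisfy one of three structure conditions. -/
theorem compressed_not_initSeg_structure (n : ℕ) (B : Finset (Finset (Fin n)))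
    (hB : ∀ x ∈ B, Even x.card) (hcomp : Compressed B)
    (hnotinit : ¬ IsInitSeg (fun x => Even x.card) B)
    (x y : Finset (Fin n)) (hx : x ∉ B) (hxeven : Even x.card)
    (hy : y ∈ B) (hxy : wlexLt x y) :
    ((x ∩ y).card = 1 ∧ x ∪ y = Finset.univ) ∨
      (x ∩ y = ∅ ∧ ∃ k : Fin n, x ∪ y = Finset.univ \ {k}) ∨
      x = yᶜ := by
  classical
  -- For every pair i ≠ j, x and y cannot agree on both i and j
  have key : ∀ i j : Fin n, i ≠ j → ¬((i ∈ x ↔ i ∈ y) ∧ (j ∈ x ↔ j ∈ y)) := by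
    rintro i j hij ⟨hi, hj⟩
    by_cases hix : i ∈ x <;> by_cases hjx : j ∈ x
    · exact key_contradiction B hcomp x y hx hxeven hy hxy i j hij true true
        (by simp [hix]) (by simp [hjx]) (by simp [hi.mp hix]) (by simp [hj.mp hjx])
    · exact key_contradiction B hcomp x y hx hxeven hy hxy i j hij true false
        (by simp [hix]) (by simp [hjx]) (by simp [hi.mp hix])
        (by simp only [Bool.false_eq_true, iff_false]; exact fun h => hjx (hj.mpr h))
    · exact key_contradiction B hcomp x y hx hxeven hy hxy i j hij false true
        (by simp [hix]) (by simp [hjx]) (by simp only [Bool.false_eq_true, iff_false]; exact fun h => hix (hi.mpr h))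
        (by simp [hj.mp hjx])
    · exact key_contradiction B hcomp x y hx hxeven hy hxy i j hij false false
        (by simp [hix]) (by simp [hjx]) (by simp only [Bool.false_eq_true, iff_false]; exact fun h => hix (hi.mpr h))
        (by simp only [Bool.false_eq_true, iff_false]; exact fun h => hjx (hj.mpr h))
  set A : Finset (Fin n) := Finset.univ.filter fun k => (k ∈ x ↔ k ∈ y) with hA
  have hmemA : ∀ k, k ∈ A ↔ (k ∈ x ↔ k ∈ y) := by
    intro k; simp [hA]
  have hAcard : A.card ≤ 1 := by
    apply Finset.card_le_one.mpr
    intro a ha b hb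
    by_contra hab
    exact key a b hab ⟨(hmemA a).mp ha, (hmemA b).mp hb⟩
  interval_cases h : A.card
  · -- A = ∅ : x = yᶜ
    have hAe : A = ∅ := Finset.card_eq_zero.mp h
    right; right
    ext k
    have := (hmemA k).not.mp (by simp [hAe])
    simp only [Finset.mem_compl]
    tauto
  · -- A = {k}
    obtain ⟨k, hk⟩ := Finset.card_eq_one.mp h
    have hkagree : k ∈ x ↔ k ∈ y := (hmemA k).mp (by simp [hk])
    have hother : ∀ a, a ≠ k → ¬(a ∈ x ↔ a ∈ y) := by
      intro a hak hiff
      exact hak (by have := (hmemA a).mpr hiff; rw [hk] at this; simpa using this)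
    by_cases hkx : k ∈ x
    · -- case (1)
      left
      have hky : k ∈ y := hkagree.mp hkx
      constructor
      · have : x ∩ y = {k} := by
          ext a
          simp only [Finset.mem_inter, Finset.mem_singleton]
          constructor
          · rintro ⟨h1, h2⟩
            by_contra hak
            exact hother a hak (by tauto)
          · rintro rfl; exact ⟨hkx, hky⟩
        simp [this]
      · ext a
        simp only [Finset.mem_union, Finset.mem_univ, iff_true]
        by_cases hak : a = k
        · subst hak; exact Or.inl hkx
        · have := hother a hak; tauto
    · -- case (2)
      right; left
      have hky : k ∉ y := fun h => hkx (hkagree.mpr h)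
      constructor
      · ext a
        simp only [Finset.mem_inter, Finset.notMem_empty, iff_false]
        rintro ⟨h1, h2⟩
        by_cases hak : a = k
        · subst hak; exact hkx h1
        · exact hother a hak (by tauto)
      · refine ⟨k, ?_⟩
        ext a
        simp only [Finset.mem_union, Finset.mem_sdiff, Finset.mem_univ, true_and,
          Finset.mem_singleton]
        constructor
        · rintro (h1 | h1) <;> rintro rfl <;> [exact hkx h1; exact hky h1]
        · intro hak
          have := hother a hak; tauto
end
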